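/- arXiv:1002.4739 — 2 statements merged into one kernel-verified Lean document; each statement's English description precedes it below -/
import Mathlib

section
/- Every cyclically 4-edge-connected cubic bipartite graph with at least 8 vertices has the property that each of its edges is contained in at least three perfect matchings. -/
open SimpleGraph
open scoped Classical

universe u

variable {V : Type u}

/-- `M` is a perfect matching of `G`: a set of edges of `G` such that every
vertex is incident to exactly one edge of `M`. -/
def IsPM (G : SimpleGraph V) (M : Set (Sym2 V)) : Prop :=
  M ⊆ G.edgeSet ∧ ∀ v : V, ∃! e, e ∈ M ∧ v ∈ e

/-- The edge-cut `E(A, Aᶜ)`: edges of `G` with one end in `A` and one end outside. -/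
def cutEdges (G : SimpleGraph V) (A : Set V) : Set (Sym2 V) :=
  {e | e ∈ G.edgeSet ∧ ∃ x y, e = s(x, y) ∧ x ∈ A ∧ y ∉ A}

/-- The edge-cut `E(A, Aᶜ)` is cyclic: both sides induce a subgraph with a cycle. -/
def CyclicCut (G : SimpleGraph V) (A : Set V) : Prop :=
  ¬(G.induce A).IsAcyclic ∧ ¬(G.induce Aᶜ).IsAcyclic

/-- `G` has no cyclic edge-cut of size less than `k`. -/
def CyclicallyEdgeConnected (G : SimpleGraph V) (k : ℕ) : Prop :=
  ∀ A : Set V, CyclicCut G A → k ≤ (cutEdges G A).ncard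

/-- Every edge-cut of `G` has at least `k` edges. -/
def EdgeConnectedGe (G : SimpleGraph V) (k : ℕ) : Prop :=
  ∀ A : Set V, A.Nonempty → Aᶜ.Nonempty → k ≤ (cutEdges G A).ncard

/-- `G` is cubic: every vertex has degree three. -/
def CubicGraph (G : SimpleGraph V) : Prop :=
  ∀ v : V, (G.neighborSet v).ncard = 3

/-- `G` has no bridges. -/
def Bridgeless (G : SimpleGraph V) : Prop :=
  ∀ e ∈ G.edgeSet, ¬G.IsBridge e

/-- `G` is matching-covered: connected and every edge lies in a perfect matching. -/
def MatchingCovered (G : SimpleGraph V) : Prop :=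
  G.Connected ∧ ∀ e ∈ G.edgeSet, ∃ M, IsPM G M ∧ e ∈ M

/-- `M` is a matching of the subgraph of `G` induced on `A` which covers exactly the
vertices of `A \ X` (i.e. covers all vertices of `A` except those in `X`). -/
def IsNearPM (G : SimpleGraph V) (A X : Set V) (M : Set (Sym2 V)) : Prop :=
  (∀ e ∈ M, ∃ x y, e = s(x, y) ∧ G.Adj x y ∧ x ∈ A ∧ y ∈ A) ∧
  (∀ w ∈ A \ X, ∃! e, e ∈ M ∧ w ∈ e) ∧
  (∀ w ∈ X, ∀ e ∈ M, w ∉ e)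

/-- `IsTwistedNet G st c`: the subgraph of `G` induced on the vertex set `st` is a
twisted net with corner set `c`.  A 4-cycle is a twisted net whose corners are its
four vertices; and one may join a twisted net and a twisted net (multiplication), or
a twisted net and a single edge (incrementation), by two edges between corners. -/
inductive IsTwistedNet (G : SimpleGraph V) : Set V → Set V → Prop
  | cyc4 (a b c d : V) (hab : a ≠ b) (hac : a ≠ c) (had : a ≠ d)
      (hbc : b ≠ c) (hbd : b ≠ d) (hcd : c ≠ d)
      (hadj : ∀ x ∈ ({a, b, c, d} : Set V), ∀ y ∈ ({a, b, c, d} : Set V),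
        (G.Adj x y ↔ s(x, y) ∈ ({s(a, b), s(b, c), s(c, d), s(d, a)} : Set (Sym2 V)))) :
      IsTwistedNet G {a, b, c, d} {a, b, c, d}
  | incr (st c : Set V) (u u' v v' : V)
      (hprev : IsTwistedNet G st c)
      (hu : u ∈ c) (hu' : u' ∈ c) (huu' : u ≠ u')
      (hv : v ∉ st) (hv' : v' ∉ st) (hvv' : v ≠ v')
      (hvv'adj : G.Adj v v') (huv : G.Adj u v) (hu'v' : G.Adj u' v')
      (hcross : ∀ x ∈ st, (G.Adj x v ↔ x = u) ∧ (G.Adj x v' ↔ x = u')) :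
      IsTwistedNet G (st ∪ {v, v'}) ((c \ {u, u'}) ∪ {v, v'})
  | mult (st₁ c₁ st₂ c₂ : Set V) (u u' v v' : V)
      (h₁ : IsTwistedNet G st₁ c₁) (h₂ : IsTwistedNet G st₂ c₂)
      (hdisj : st₁ ∩ st₂ = ∅)
      (hu : u ∈ c₁) (hu' : u' ∈ c₁) (huu' : u ≠ u')
      (hv : v ∈ c₂) (hv' : v' ∈ c₂) (hvv' : v ≠ v')
      (huv : G.Adj u v) (hu'v' : G.Adj u' v')
      (hcross : ∀ x ∈ st₁, ∀ y ∈ st₂,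
        (G.Adj x y ↔ ((x = u ∧ y = v) ∨ (x = u' ∧ y = v')))) :
      IsTwistedNet G (st₁ ∪ st₂) ((c₁ \ {u, u'}) ∪ (c₂ \ {v, v'}))

/-- The set of (vertex sets of) semiblocks of `G`: inclusion-wise minimal sides of
2-edge-cuts. -/
def Semiblocks (G : SimpleGraph V) : Set (Set V) :=
  {A | A.Nonempty ∧ (cutEdges G A).ncard = 2 ∧
    ∀ A' ⊆ A, A'.Nonempty → (cutEdges G A').ncard = 2 → A' = A}

/-- The number of semiblocks of `G`; if `G` has no 2-edge-cut, `G` itself is its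
unique semiblock, so the number of semiblocks is `1` in this case. -/
noncomputable def numSemiblocks (G : SimpleGraph V) : ℕ :=
  max 1 (Semiblocks G).ncard

/-- The side `B` of a cyclic 4-edge-cut is solid if `G[B]` has no 2-edge-cut with at
least two vertices on each side. -/
def SolidSide (G : SimpleGraph V) (B : Set V) : Prop :=
  ¬∃ X ⊆ B, 2 ≤ X.ncard ∧ 2 ≤ (B \ X).ncard ∧
      ({e | e ∈ G.edgeSet ∧ ∃ x y, e = s(x, y) ∧ x ∈ X ∧ y ∈ B \ X}).ncard = 2

/-- The subgraph of `G` induced on `A` is a ladder (a `2 × k` grid) whose two ends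
(the edges both of whose end-vertices have degree two in the ladder) are `f₁` and `f₂`. -/
def IsLadder (G : SimpleGraph V) (A : Set V) (f₁ f₂ : Sym2 V) : Prop :=
  ∃ (k : ℕ) (x y : Fin (k + 1) → V),
    Function.Injective x ∧ Function.Injective y ∧ (∀ i j, x i ≠ y j) ∧
    A = Set.range x ∪ Set.range y ∧
    (∀ u ∈ A, ∀ v ∈ A, (G.Adj u v ↔
      ((∃ i, u = x i ∧ v = y i) ∨ (∃ i, u = y i ∧ v = x i) ∨
       (∃ i : Fin k, (u = x i.castSucc ∧ v = x i.succ) ∨ (u = x i.succ ∧ v = x i.castSucc) ∨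
         (u = y i.castSucc ∧ v = y i.succ) ∨ (u = y i.succ ∧ v = y i.castSucc))))) ∧
    f₁ = s(x 0, y 0) ∧ f₂ = s(x (Fin.last k), y (Fin.last k))

/-- The subgraph of `G` induced on `A` is a cycle of length four. -/
def Is4Cycle (G : SimpleGraph V) (A : Set V) : Prop :=
  ∃ a b c d : V, a ≠ b ∧ a ≠ c ∧ a ≠ d ∧ b ≠ c ∧ b ≠ d ∧ c ≠ d ∧
    A = {a, b, c, d} ∧
    G.Adj a b ∧ G.Adj b c ∧ G.Adj c d ∧ G.Adj d a ∧ ¬G.Adj a c ∧ ¬G.Adj b d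

/-- The graph `G_{(pq)}` obtained from `G[A]` by adding a new vertex (`Sum.inr 0`)
adjacent to `p` and `q`, a new vertex (`Sum.inr 1`) adjacent to `r` and `t`, and an
edge between the two new vertices. -/
def GExt (G : SimpleGraph V) (A : Set V) (p q r t : V) : SimpleGraph (↥A ⊕ Fin 2) :=
  SimpleGraph.fromRel (fun x y =>
    (∃ u v : A, x = Sum.inl u ∧ y = Sum.inl v ∧ G.Adj u v) ∨
    (∃ u : A, x = Sum.inr 0 ∧ y = Sum.inl u ∧ ((u : V) = p ∨ (u : V) = q)) ∨
    (∃ u : A, x = Sum.inr 1 ∧ y = Sum.inl u ∧ ((u : V) = r ∨ (u : V) = t)) ∨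
    (x = Sum.inr 0 ∧ y = Sum.inr 1))

/-- Perfect matching, as a finite edge set. -/
def IsPMF (G : SimpleGraph V) (M : Finset (Sym2 V)) : Prop :=
  (↑M : Set (Sym2 V)) ⊆ G.edgeSet ∧ ∀ v : V, ∃! e, e ∈ M ∧ v ∈ e

/-- `w` lies in the perfect matching polytope of `G`: it is a convex combination of
characteristic vectors of perfect matchings of `G`. -/
def InPMPolytope [Fintype V] [DecidableEq V] (G : SimpleGraph V) (w : Sym2 V → ℝ) : Prop :=
  ∃ μ : Finset (Sym2 V) → ℝ,
    (∀ M, 0 ≤ μ M) ∧ (∀ M, μ M ≠ 0 → IsPMF G M) ∧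
    (∑ M : Finset (Sym2 V), μ M) = 1 ∧
    ∀ e : Sym2 V, w e = ∑ M : Finset (Sym2 V), μ M * (if e ∈ M then 1 else 0)
set_option linter.unusedSectionVars false
set_option linter.unusedVariables false

open Equiv

namespace TripleAux


/-- The edge set associated to a partner function. -/
def pmSet (p : V → V) : Set (Sym2 V) := Set.range (fun z => s(z, p z))

lemma isPM_pmSet (G : SimpleGraph V) (p : V → V) (hinv : Function.Involutive p)
    (hadj : ∀ z, G.Adj z (p z)) : IsPM G (pmSet p) := by
  constructor
  · rintro E ⟨z, rfl⟩
    exact (hadj z)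
  · intro w
    refine ⟨s(w, p w), ⟨⟨w, rfl⟩, by simp⟩, ?_⟩
    rintro E ⟨⟨z, rfl⟩, hw⟩
    rcases Sym2.mem_iff.mp hw with rfl | rfl
    · rfl
    · rw [hinv z]
      exact Sym2.eq_swap

lemma pmSet_ne (p q : V → V) (hq : Function.Involutive q) (z : V) (h : p z ≠ q z) :
    pmSet p ≠ pmSet q := by
  intro hEq
  have hmem : s(z, p z) ∈ pmSet q := hEq ▸ ⟨z, rfl⟩
  obtain ⟨w, hw⟩ := hmem
  rw [Sym2.eq_iff] at hw
  rcases hw with ⟨rfl, hw2⟩ | ⟨hw1, rfl⟩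
  · exact h hw2.symm
  · apply h
    rw [← hw1, hq]

lemma mem_pmSet (p : V → V) (u v : V) (h : p u = v) : s(u, v) ∈ pmSet p :=
  ⟨u, by simp only []; rw [h]⟩

lemma three_le_ncard (G : SimpleGraph V) [Fintype V] (e : Sym2 V) (u v : V)
    (he : e = s(u, v)) (p q r : V → V)
    (hpinv : Function.Involutive p) (hqinv : Function.Involutive q)
    (hrinv : Function.Involutive r)
    (hpadj : ∀ z, G.Adj z (p z)) (hqadj : ∀ z, G.Adj z (q z))
    (hradj : ∀ z, G.Adj z (r z))
    (hpu : p u = v) (hqu : q u = v) (hru : r u = v)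
    (hpq : ∃ z, p z ≠ q z) (hpr : ∃ z, p z ≠ r z) (hqr : ∃ z, q z ≠ r z) :
    3 ≤ {M : Set (Sym2 V) | IsPM G M ∧ e ∈ M}.ncard := by
  obtain ⟨z1, h1⟩ := hpq
  obtain ⟨z2, h2⟩ := hpr
  obtain ⟨z3, h3⟩ := hqr
  have hne1 : pmSet p ≠ pmSet q := pmSet_ne p q hqinv z1 h1
  have hne2 : pmSet p ≠ pmSet r := pmSet_ne p r hrinv z2 h2
  have hne3 : pmSet q ≠ pmSet r := pmSet_ne q r hrinv z3 h3
  have hsub : ({pmSet p, pmSet q, pmSet r} : Set (Set (Sym2 V))) ⊆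
      {M : Set (Sym2 V) | IsPM G M ∧ e ∈ M} := by
    rintro M (rfl | rfl | rfl)
    · exact ⟨isPM_pmSet G p hpinv hpadj, he ▸ mem_pmSet p u v hpu⟩
    · exact ⟨isPM_pmSet G q hqinv hqadj, he ▸ mem_pmSet q u v hqu⟩
    · exact ⟨isPM_pmSet G r hrinv hradj, he ▸ mem_pmSet r u v hru⟩
  have hcard : ({pmSet p, pmSet q, pmSet r} : Set (Set (Sym2 V))).ncard = 3 := by
    rw [Set.ncard_insert_of_notMem (by simp [hne1, hne2]) (Set.toFinite _),
      Set.ncard_insert_of_notMem (by simp [hne3]) (Set.toFinite _),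
      Set.ncard_singleton]
  calc 3 = ({pmSet p, pmSet q, pmSet r} : Set (Set (Sym2 V))).ncard := hcard.symm
    _ ≤ _ := Set.ncard_le_ncard hsub (Set.toFinite _)



/-- Double counting: if all `H`-neighbors of vertices of `S` lie in `T`,
then the sum of degrees over `S` is at most the sum over `T`. -/
lemma sum_deg_le (H : SimpleGraph V) [Fintype V] (S T : Finset V)
    (h : ∀ a ∈ S, ∀ b, H.Adj a b → b ∈ T) :
    ∑ a ∈ S, H.degree a ≤ ∑ b ∈ T, H.degree b := by
  classical
  have hP : ∀ (W : Finset V), (W.biUnion (fun a =>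
      (H.neighborFinset a).image (fun b => (a, b)))).card = ∑ a ∈ W, H.degree a := by
    intro W
    rw [Finset.card_biUnion]
    · refine Finset.sum_congr rfl fun a _ => ?_
      rw [Finset.card_image_of_injective _ (fun x y hxy => (Prod.mk.injEq _ _ _ _).mp hxy |>.2),
        ← SimpleGraph.card_neighborFinset_eq_degree]
    · intro a _ b _ hab
      simp only [Finset.disjoint_left, Finset.mem_image, SimpleGraph.mem_neighborFinset]
      rintro ⟨x, y⟩ ⟨c, _, hc⟩ ⟨d, _, hd⟩
      obtain ⟨rfl, rfl⟩ := Prod.mk.injEq _ _ _ _ |>.mp hc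
      obtain ⟨rfl, rfl⟩ := Prod.mk.injEq _ _ _ _ |>.mp hd
      exact hab rfl
  have hQ : ∀ (W : Finset V), (W.biUnion (fun b =>
      (H.neighborFinset b).image (fun a => (a, b)))).card = ∑ b ∈ W, H.degree b := by
    intro W
    rw [Finset.card_biUnion]
    · refine Finset.sum_congr rfl fun a _ => ?_
      rw [Finset.card_image_of_injective _ (fun x y hxy => (Prod.mk.injEq _ _ _ _).mp hxy |>.1),
        ← SimpleGraph.card_neighborFinset_eq_degree]
    · intro a _ b _ hab
      simp only [Finset.disjoint_left, Finset.mem_image, SimpleGraph.mem_neighborFinset]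
      rintro ⟨x, y⟩ ⟨c, _, hc⟩ ⟨d, _, hd⟩
      obtain ⟨rfl, rfl⟩ := Prod.mk.injEq _ _ _ _ |>.mp hc
      obtain ⟨rfl, rfl⟩ := Prod.mk.injEq _ _ _ _ |>.mp hd
      exact hab rfl
  rw [← hP S, ← hQ T]
  apply Finset.card_le_card
  intro x hx
  simp only [Finset.mem_biUnion, Finset.mem_image, SimpleGraph.mem_neighborFinset] at hx ⊢
  obtain ⟨a, ha, b, hb, rfl⟩ := hx
  exact ⟨b, h a ha b hb, a, hb.symm, rfl⟩

/-- Hall's theorem packaged: produce an involutive partner function (perfect matching)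
for a bipartite graph satisfying the Hall condition, with equal-size sides. -/
lemma exists_pm_fn (H : SimpleGraph V) [Fintype V] (C₀ : Set V)
    (hbi : ∀ a b, H.Adj a b → (a ∈ C₀ ↔ b ∉ C₀))
    (hcardeq : C₀.toFinset.card = C₀ᶜ.toFinset.card)
    (hhall : ∀ s : Finset ↥C₀, s.card ≤ (s.biUnion (fun a => H.neighborFinset ↑a)).card) :
    ∃ p : V → V, Function.Involutive p ∧ ∀ z, H.Adj z (p z) := by
  classical
  obtain ⟨f, hfinj, hfmem⟩ :=
    (Finset.all_card_le_biUnion_card_iff_exists_injective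
      (fun a : ↥C₀ => H.neighborFinset ↑a)).mp hhall
  have hfadj : ∀ a : ↥C₀, H.Adj ↑a (f a) := fun a =>
    (SimpleGraph.mem_neighborFinset _ _ _).mp (hfmem a)
  have hfC : ∀ a : ↥C₀, f a ∈ C₀ᶜ := fun a => by
    have := (hbi _ _ (hfadj a)).mp a.2
    exact this
  -- image of f is all of C₀ᶜ
  have himg : (Finset.univ.image (fun a : ↥C₀ => f a)) = C₀ᶜ.toFinset := by
    apply Finset.eq_of_subset_of_card_le
    · intro b hb
      simp only [Finset.mem_image] at hb
      obtain ⟨a, _, rfl⟩ := hb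
      simpa using hfC a
    · rw [Finset.card_image_of_injective _ hfinj, ← hcardeq]
      simp [Set.toFinset_card]
  have hsurj : ∀ b ∈ C₀ᶜ, ∃ a : ↥C₀, f a = b := by
    intro b hb
    have : b ∈ (Finset.univ.image (fun a : ↥C₀ => f a)) := by
      rw [himg]; simpa using hb
    simpa using this
  refine ⟨fun z => if h : z ∈ C₀ then f ⟨z, h⟩ else ↑(Classical.choose (hsurj z h)), ?_, ?_⟩
  · intro z
    by_cases h : z ∈ C₀
    · simp only [dif_pos h]
      have h2 : f ⟨z, h⟩ ∈ C₀ᶜ := hfC _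
      rw [dif_neg (by simpa using h2)]
      have hspec := Classical.choose_spec (hsurj (f ⟨z, h⟩) h2)
      have := hfinj hspec
      rw [this]
    · simp only [dif_neg h]
      have hmem : z ∈ C₀ᶜ := h
      set a := Classical.choose (hsurj z hmem) with ha
      have hspec : f a = z := Classical.choose_spec (hsurj z hmem)
      rw [dif_pos a.2]
      have : (⟨(a : V), a.2⟩ : ↥C₀) = a := rfl
      rw [this, hspec]
  · intro z
    by_cases h : z ∈ C₀
    · simp only [dif_pos h]
      exact hfadj ⟨z, h⟩
    · simp only [dif_neg h]
      have hspec : f (Classical.choose (hsurj z h)) = z := Classical.choose_spec (hsurj z h)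
      have := hfadj (Classical.choose (hsurj z h))
      rw [hspec] at this
      exact this.symm

lemma sides_card_eq (G : SimpleGraph V) [Fintype V] (C₀ : Set V)
    (hbi : ∀ a b, G.Adj a b → (a ∈ C₀ ↔ b ∉ C₀))
    (hdeg : ∀ z, G.degree z = 3) : C₀.toFinset.card = C₀ᶜ.toFinset.card := by
  have h1 : ∑ a ∈ C₀.toFinset, G.degree a ≤ ∑ b ∈ C₀ᶜ.toFinset, G.degree b := by
    apply sum_deg_le
    intro a ha b hab
    simp only [Set.mem_toFinset] at *
    exact (hbi a b hab).mp ha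
  have h2 : ∑ a ∈ C₀ᶜ.toFinset, G.degree a ≤ ∑ b ∈ C₀.toFinset, G.degree b := by
    apply sum_deg_le
    intro a ha b hab
    simp only [Set.mem_toFinset, Set.mem_compl_iff] at *
    by_contra hb
    exact hb ((hbi b a hab.symm).mpr ha)
  have e1 : ∑ a ∈ C₀.toFinset, G.degree a = 3 * C₀.toFinset.card := by
    rw [Finset.sum_congr rfl (fun a _ => hdeg a), Finset.sum_const, smul_eq_mul, mul_comm]
  have e2 : ∑ a ∈ C₀ᶜ.toFinset, G.degree a = 3 * C₀ᶜ.toFinset.card := by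
    rw [Finset.sum_congr rfl (fun a _ => hdeg a), Finset.sum_const, smul_eq_mul, mul_comm]
  omega

/-- The modified graph in which `u` and `v` are joined only to each other. -/
def forceEdge (G : SimpleGraph V) (u v : V) : SimpleGraph V where
  Adj a b := a ≠ b ∧ ((a = u ∧ b = v) ∨ (a = v ∧ b = u) ∨
    (G.Adj a b ∧ a ≠ u ∧ a ≠ v ∧ b ≠ u ∧ b ≠ v))
  symm := Std.Symm.mk <| by
    rintro a b ⟨hne, (⟨rfl, rfl⟩ | ⟨rfl, rfl⟩ | ⟨h, h1, h2, h3, h4⟩)⟩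
    · exact ⟨hne.symm, Or.inr (Or.inl ⟨rfl, rfl⟩)⟩
    · exact ⟨hne.symm, Or.inl ⟨rfl, rfl⟩⟩
    · exact ⟨hne.symm, Or.inr (Or.inr ⟨h.symm, h3, h4, h1, h2⟩)⟩
  loopless := ⟨fun a h => h.1 rfl⟩

lemma forceEdge_le (G : SimpleGraph V) (u v : V) (huv : G.Adj u v) :
    ∀ a b, (forceEdge G u v).Adj a b → G.Adj a b := by
  rintro a b ⟨-, (⟨rfl, rfl⟩ | ⟨rfl, rfl⟩ | ⟨h, -⟩)⟩
  · exact huv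
  · exact huv.symm
  · exact h

lemma forceEdge_nbr_u (G : SimpleGraph V) [Fintype V] (u v : V) (huv : G.Adj u v) :
    (forceEdge G u v).neighborFinset u = {v} := by
  ext b
  simp only [mem_neighborFinset, Finset.mem_singleton]
  constructor
  · rintro ⟨hne, (⟨-, rfl⟩ | ⟨h, rfl⟩ | ⟨-, h, -⟩)⟩
    · rfl
    · exact absurd h (G.ne_of_adj huv)
    · exact absurd rfl h
  · rintro rfl
    exact ⟨G.ne_of_adj huv, Or.inl ⟨rfl, rfl⟩⟩

lemma forceEdge_nbr_v (G : SimpleGraph V) [Fintype V] (u v : V) (huv : G.Adj u v) :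
    (forceEdge G u v).neighborFinset v = {u} := by
  ext b
  simp only [mem_neighborFinset, Finset.mem_singleton]
  constructor
  · rintro ⟨hne, (⟨h, rfl⟩ | ⟨-, rfl⟩ | ⟨-, -, h, -⟩)⟩
    · exact absurd h (G.ne_of_adj huv).symm
    · rfl
    · exact absurd rfl h
  · rintro rfl
    exact ⟨(G.ne_of_adj huv).symm, Or.inr (Or.inl ⟨rfl, rfl⟩)⟩

lemma forceEdge_nbr_other (G : SimpleGraph V) [Fintype V] (C₀ : Set V)
    (hbi : ∀ a b, G.Adj a b → (a ∈ C₀ ↔ b ∉ C₀)) (u v : V) (hu : u ∈ C₀) (huv : G.Adj u v) :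
    ∀ a, a ∈ C₀ → a ≠ u →
    (forceEdge G u v).neighborFinset a = (G.neighborFinset a).erase v := by
  intro a ha hau
  have hv : v ∉ C₀ := (hbi u v huv).mp hu
  have hav : a ≠ v := fun h => hv (h ▸ ha)
  ext b
  simp only [mem_neighborFinset, Finset.mem_erase]
  constructor
  · rintro ⟨hne, (⟨rfl, rfl⟩ | ⟨rfl, rfl⟩ | ⟨h, -, -, -, h4⟩)⟩
    · exact absurd rfl hau
    · exact absurd rfl hav
    · exact ⟨h4, h⟩
  · rintro ⟨hbv, h⟩
    have hbu : b ≠ u := by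
      intro hb
      exact ((hbi a b h).mp ha) (hb ▸ hu)
    exact ⟨G.ne_of_adj h, Or.inr (Or.inr ⟨h, hau, hav, hbu, hbv⟩)⟩

lemma forceEdge_hall (G : SimpleGraph V) [Fintype V] (C₀ : Set V)
    (hbi : ∀ a b, G.Adj a b → (a ∈ C₀ ↔ b ∉ C₀)) (hdeg : ∀ z, G.degree z = 3)
    (u v : V) (hu : u ∈ C₀) (huv : G.Adj u v) : ∀ s : Finset ↥C₀,
    s.card ≤ (s.biUnion (fun a => (forceEdge G u v).neighborFinset ↑a)).card := by
  intro s
  set H' := forceEdge G u v with hH'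
  set S : Finset V := s.image Subtype.val with hS
  set T : Finset V := s.biUnion (fun a => H'.neighborFinset ↑a) with hT
  have hv : v ∉ C₀ := (hbi u v huv).mp hu
  have hScard : S.card = s.card := Finset.card_image_of_injective _ Subtype.val_injective
  have hSC : ∀ a ∈ S, a ∈ C₀ := by
    intro a ha
    simp only [hS, Finset.mem_image] at ha
    obtain ⟨a', -, rfl⟩ := ha
    exact a'.2
  have hsub : ∀ a ∈ S, ∀ b, H'.Adj a b → b ∈ T := by
    intro a ha b hab
    simp only [hS, Finset.mem_image] at ha
    obtain ⟨a', ha', rfl⟩ := ha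
    simp only [hT, Finset.mem_biUnion]
    exact ⟨a', ha', (mem_neighborFinset _ _ _).mpr hab⟩
  have hdegv : H'.degree v = 1 := by
    rw [← card_neighborFinset_eq_degree, forceEdge_nbr_v G u v huv, Finset.card_singleton]
  have hdegle : ∀ b, H'.degree b ≤ 3 := by
    intro b
    rw [← hdeg b, ← card_neighborFinset_eq_degree, ← card_neighborFinset_eq_degree]
    apply Finset.card_le_card
    intro c hc
    rw [mem_neighborFinset] at *
    exact forceEdge_le G u v huv _ _ hc
  have hdeglow : ∀ a ∈ S, a ≠ u → 3 ≤ H'.degree a + (if G.Adj a v then 1 else 0) := by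
    intro a ha hau
    rw [← card_neighborFinset_eq_degree,
      forceEdge_nbr_other G C₀ hbi u v hu huv a (hSC a ha) hau]
    have hda := hdeg a
    rw [← card_neighborFinset_eq_degree] at hda
    by_cases hadj : G.Adj a v
    · rw [if_pos hadj, Finset.card_erase_of_mem ((mem_neighborFinset _ _ _).mpr hadj)]
      omega
    · rw [if_neg hadj, Finset.erase_eq_of_notMem
        (fun h => hadj ((mem_neighborFinset _ _ _).mp h))]
      omega
  have hfilter : (S.filter (fun a => a ≠ u ∧ G.Adj a v)).card ≤ 2 := by
    have hsub2 : S.filter (fun a => a ≠ u ∧ G.Adj a v) ⊆ (G.neighborFinset v).erase u := by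
      intro a ha
      simp only [Finset.mem_filter] at ha
      rw [Finset.mem_erase, mem_neighborFinset]
      exact ⟨ha.2.1, ha.2.2.symm⟩
    have hdv := hdeg v
    rw [← card_neighborFinset_eq_degree] at hdv
    calc (S.filter (fun a => a ≠ u ∧ G.Adj a v)).card
        ≤ ((G.neighborFinset v).erase u).card := Finset.card_le_card hsub2
      _ ≤ 2 := by
          rw [Finset.card_erase_of_mem ((mem_neighborFinset _ _ _).mpr huv.symm)]
          omega
  have hlow : 3 * S.card ≤ (∑ a ∈ S, H'.degree a) + ((if u ∈ S then 2 else 0) + 2) := by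
    have hpt : ∀ a ∈ S, 3 ≤ H'.degree a +
        ((if a = u then 2 else 0) + (if a ≠ u ∧ G.Adj a v then 1 else 0)) := by
      intro a ha
      by_cases hau : a = u
      · subst hau
        have h1 : H'.degree a = 1 := by
          rw [← card_neighborFinset_eq_degree, forceEdge_nbr_u G a v huv,
            Finset.card_singleton]
        rw [h1, if_pos rfl, if_neg (show ¬(a ≠ a ∧ G.Adj a v) from fun hc => hc.1 rfl)]
      · have h3 := hdeglow a ha hau
        by_cases h2 : G.Adj a v
        · simp only [if_neg hau, if_pos h2, if_pos (And.intro hau h2)] at h3 ⊢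
          omega
        · have : ¬(a ≠ u ∧ G.Adj a v) := fun hc => h2 hc.2
          simp only [if_neg hau, if_neg h2, if_neg this] at h3 ⊢
          omega
    calc 3 * S.card = ∑ _a ∈ S, 3 := by rw [Finset.sum_const, smul_eq_mul, mul_comm]
      _ ≤ ∑ a ∈ S, (H'.degree a +
          ((if a = u then 2 else 0) + (if a ≠ u ∧ G.Adj a v then 1 else 0))) :=
          Finset.sum_le_sum hpt
      _ = (∑ a ∈ S, H'.degree a) + ((∑ a ∈ S, if a = u then 2 else 0)
            + ∑ a ∈ S, (if a ≠ u ∧ G.Adj a v then 1 else 0)) := by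
          rw [Finset.sum_add_distrib, Finset.sum_add_distrib]
      _ ≤ (∑ a ∈ S, H'.degree a) + ((if u ∈ S then 2 else 0) + 2) := by
          gcongr
          · rw [Finset.sum_ite_eq' S u (fun _ => 2)]
          · rw [Finset.sum_ite, Finset.sum_const_zero, add_zero, Finset.sum_const,
              smul_eq_mul, mul_one]
            exact hfilter
  have hup : (∑ b ∈ T, H'.degree b) + (if u ∈ S then 2 else 0) ≤ 3 * T.card := by
    by_cases hus : u ∈ S
    · have hvT : v ∈ T := by
        simp only [hS, Finset.mem_image] at hus
        obtain ⟨a', ha', ha''⟩ := hus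
        simp only [hT, Finset.mem_biUnion]
        refine ⟨a', ha', ?_⟩
        rw [mem_neighborFinset, ha'']
        exact ⟨G.ne_of_adj huv, Or.inl ⟨rfl, rfl⟩⟩
      rw [if_pos hus]
      have heq : ∑ b ∈ T, H'.degree b = H'.degree v + ∑ b ∈ T.erase v, H'.degree b :=
        (Finset.add_sum_erase T (fun b => H'.degree b) hvT).symm
      rw [heq, hdegv]
      have hb : ∑ b ∈ T.erase v, H'.degree b ≤ 3 * (T.card - 1) := by
        calc ∑ b ∈ T.erase v, H'.degree b ≤ ∑ _b ∈ T.erase v, 3 :=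
            Finset.sum_le_sum (fun b _ => hdegle b)
          _ = 3 * (T.card - 1) := by
              rw [Finset.sum_const, smul_eq_mul, mul_comm, Finset.card_erase_of_mem hvT]
      have hT1 : 1 ≤ T.card := Finset.card_pos.mpr ⟨v, hvT⟩
      omega
    · rw [if_neg hus, add_zero]
      calc ∑ b ∈ T, H'.degree b ≤ ∑ _b ∈ T, 3 := Finset.sum_le_sum (fun b _ => hdegle b)
        _ = 3 * T.card := by rw [Finset.sum_const, smul_eq_mul, mul_comm]
  have hmid := sum_deg_le H' S T hsub
  omega


lemma forceEdge_adj_u (G : SimpleGraph V) (u v : V) (huv : G.Adj u v) (b : V)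
    (h : (forceEdge G u v).Adj u b) : b = v := by
  rcases h with ⟨hne, (⟨-, rfl⟩ | ⟨h1, rfl⟩ | ⟨-, h1, -⟩)⟩
  · rfl
  · exact h1
  · exact absurd rfl h1
/-- The 2-factor: `G` minus the perfect matching given by `p1`. -/
def minusPM (G : SimpleGraph V) (p1 : V → V) (hinv : Function.Involutive p1) :
    SimpleGraph V where
  Adj a b := G.Adj a b ∧ p1 a ≠ b
  symm := Std.Symm.mk <| by
    rintro a b ⟨h, hne⟩
    refine ⟨h.symm, fun hc => hne ?_⟩
    rw [← hc, hinv]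
  loopless := ⟨fun a h => G.ne_of_adj h.1 rfl⟩

lemma minusPM_nbr (G : SimpleGraph V) [Fintype V] (p1 : V → V)
    (hinv : Function.Involutive p1) (z : V) :
    (minusPM G p1 hinv).neighborFinset z = (G.neighborFinset z).erase (p1 z) := by
  ext b
  simp only [mem_neighborFinset, Finset.mem_erase]
  constructor
  · rintro ⟨h, hne⟩
    exact ⟨fun hc => hne hc.symm, h⟩
  · rintro ⟨hne, h⟩
    exact ⟨h, fun hc => hne hc.symm⟩

lemma minusPM_degree (G : SimpleGraph V) [Fintype V] (p1 : V → V)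
    (hinv : Function.Involutive p1) (hadj : ∀ z, G.Adj z (p1 z))
    (hdeg : ∀ z, G.degree z = 3) (z : V) : (minusPM G p1 hinv).degree z = 2 := by
  rw [← card_neighborFinset_eq_degree, minusPM_nbr,
    Finset.card_erase_of_mem ((mem_neighborFinset _ _ _).mpr (hadj z))]
  have := hdeg z
  rw [← card_neighborFinset_eq_degree] at this
  omega

lemma minusPM_hall (G : SimpleGraph V) [Fintype V] (C₀ : Set V) (p1 : V → V)
    (hinv : Function.Involutive p1) (hadj : ∀ z, G.Adj z (p1 z))
    (hdeg : ∀ z, G.degree z = 3) : ∀ s : Finset ↥C₀,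
    s.card ≤ (s.biUnion (fun a => (minusPM G p1 hinv).neighborFinset ↑a)).card := by
  intro s
  set F := minusPM G p1 hinv with hF
  set S : Finset V := s.image Subtype.val with hS
  set T : Finset V := s.biUnion (fun a => F.neighborFinset ↑a) with hT
  have hScard : S.card = s.card := Finset.card_image_of_injective _ Subtype.val_injective
  have hsub : ∀ a ∈ S, ∀ b, F.Adj a b → b ∈ T := by
    intro a ha b hab
    simp only [hS, Finset.mem_image] at ha
    obtain ⟨a', ha', rfl⟩ := ha
    simp only [hT, Finset.mem_biUnion]
    exact ⟨a', ha', (mem_neighborFinset _ _ _).mpr hab⟩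
  have hmid := sum_deg_le F S T hsub
  have hdF : ∀ z, F.degree z = 2 := minusPM_degree G p1 hinv hadj hdeg
  have e1 : ∑ a ∈ S, F.degree a = 2 * S.card := by
    rw [Finset.sum_congr rfl (fun a _ => hdF a), Finset.sum_const, smul_eq_mul, mul_comm]
  have e2 : ∑ b ∈ T, F.degree b = 2 * T.card := by
    rw [Finset.sum_congr rfl (fun a _ => hdF a), Finset.sum_const, smul_eq_mul, mul_comm]
  omega

/-- The third-neighbor partner function. -/
lemma exists_third (G : SimpleGraph V) [Fintype V]
    (hdeg : ∀ z, G.degree z = 3) (p1 p2 : V → V)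
    (hinv1 : Function.Involutive p1) (hinv2 : Function.Involutive p2)
    (hadj1 : ∀ z, G.Adj z (p1 z)) (hadj2 : ∀ z, G.Adj z (p2 z))
    (h12 : ∀ z, p1 z ≠ p2 z) :
    ∃ p3 : V → V, Function.Involutive p3 ∧ (∀ z, G.Adj z (p3 z)) ∧
      (∀ z, p1 z ≠ p3 z) ∧ (∀ z, p2 z ≠ p3 z) := by
  have hex : ∀ z, ∃ b, (G.Adj z b ∧ b ≠ p1 z ∧ b ≠ p2 z) ∧
      (∀ b', (G.Adj z b' ∧ b' ≠ p1 z ∧ b' ≠ p2 z) → b' = b) := by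
    intro z
    have hcard : (((G.neighborFinset z).erase (p1 z)).erase (p2 z)).card = 1 := by
      have h3 := hdeg z
      rw [← card_neighborFinset_eq_degree] at h3
      rw [Finset.card_erase_of_mem, Finset.card_erase_of_mem
        ((mem_neighborFinset _ _ _).mpr (hadj1 z))]
      · omega
      · rw [Finset.mem_erase]
        exact ⟨fun hc => h12 z hc.symm, (mem_neighborFinset _ _ _).mpr (hadj2 z)⟩
    obtain ⟨b, hb⟩ := Finset.card_eq_one.mp hcard
    refine ⟨b, ?_, ?_⟩
    · have : b ∈ ((G.neighborFinset z).erase (p1 z)).erase (p2 z) := by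
        rw [hb]; exact Finset.mem_singleton_self b
      simp only [Finset.mem_erase, mem_neighborFinset] at this
      exact ⟨this.2.2, this.2.1, this.1⟩
    · intro b' hb'
      have : b' ∈ ((G.neighborFinset z).erase (p1 z)).erase (p2 z) := by
        simp only [Finset.mem_erase, mem_neighborFinset]
        exact ⟨hb'.2.2, hb'.2.1, hb'.1⟩
      rw [hb] at this
      exact Finset.mem_singleton.mp this
  choose p3 hp3 hp3u using hex
  have hprop : ∀ z, G.Adj z (p3 z) ∧ p3 z ≠ p1 z ∧ p3 z ≠ p2 z := hp3
  refine ⟨p3, ?_, fun z => (hprop z).1, fun z => ((hprop z).2.1).symm,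
    fun z => ((hprop z).2.2).symm⟩
  intro z
  refine (hp3u (p3 z) z ⟨((hprop z).1).symm, ?_, ?_⟩).symm
  · intro hc
    have : p1 z = p3 z := by
      have := congrArg p1 hc
      rwa [hinv1] at this
    exact ((hprop z).2.1) this.symm
  · intro hc
    have : p2 z = p3 z := by
      have := congrArg p2 hc
      rwa [hinv2] at this
    exact ((hprop z).2.2) this.symm

/-- Assemble the three pairwise disjoint perfect matching functions. -/
lemma exists_setup (G : SimpleGraph V) [Fintype V] (C₀ : Set V)
    (hbi : ∀ a b, G.Adj a b → (a ∈ C₀ ↔ b ∉ C₀))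
    (hdeg : ∀ z, G.degree z = 3) (u v : V) (hu : u ∈ C₀) (huv : G.Adj u v) :
    ∃ p1 p2 p3 : V → V,
      Function.Involutive p1 ∧ Function.Involutive p2 ∧ Function.Involutive p3 ∧
      (∀ z, G.Adj z (p1 z)) ∧ (∀ z, G.Adj z (p2 z)) ∧ (∀ z, G.Adj z (p3 z)) ∧
      p1 u = v ∧ (∀ z, p1 z ≠ p2 z) ∧ (∀ z, p1 z ≠ p3 z) ∧ (∀ z, p2 z ≠ p3 z) := by
  have hcardeq := sides_card_eq G C₀ hbi hdeg
  -- p1 via the forced-edge graph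
  obtain ⟨p1, hinv1, hadj1'⟩ := exists_pm_fn (forceEdge G u v) C₀
    (fun a b hab => hbi a b (forceEdge_le G u v huv a b hab)) hcardeq
    (forceEdge_hall G C₀ hbi hdeg u v hu huv)
  have hadj1 : ∀ z, G.Adj z (p1 z) := fun z => forceEdge_le G u v huv _ _ (hadj1' z)
  have hp1u : p1 u = v := forceEdge_adj_u G u v huv _ (hadj1' u)
  -- p2 via the 2-factor
  obtain ⟨p2, hinv2, hadj2'⟩ := exists_pm_fn (minusPM G p1 hinv1) C₀
    (fun a b hab => hbi a b hab.1) hcardeq (minusPM_hall G C₀ p1 hinv1 hadj1 hdeg)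
  have hadj2 : ∀ z, G.Adj z (p2 z) := fun z => (hadj2' z).1
  have h12 : ∀ z, p1 z ≠ p2 z := fun z => (hadj2' z).2
  -- p3 as the third neighbor
  obtain ⟨p3, hinv3, hadj3, h13, h23⟩ :=
    exists_third G hdeg p1 p2 hinv1 hinv2 hadj1 hadj2 h12
  exact ⟨p1, p2, p3, hinv1, hinv2, hinv3, hadj1, hadj2, hadj3, hp1u, h12, h13, h23⟩



/-- The alternating-step permutation of two disjoint perfect matchings. -/
noncomputable def stepPerm (C₀ : Set V) (p1 p2 : V → V) (hinv1 : Function.Involutive p1)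
    (hinv2 : Function.Involutive p2) (hc1 : ∀ z, z ∈ C₀ ↔ p1 z ∉ C₀)
    (hc2 : ∀ z, z ∈ C₀ ↔ p2 z ∉ C₀) : Equiv.Perm V where
  toFun z := if z ∈ C₀ then p1 z else p2 z
  invFun z := if z ∈ C₀ then p2 z else p1 z
  left_inv := by
    intro z
    dsimp only
    by_cases h : z ∈ C₀
    · rw [if_pos h, if_neg (((hc1 z).mp h)), hinv1]
    · have h2 : p2 z ∈ C₀ := by
        by_contra hc
        exact h ((hc2 z).mpr hc)
      rw [if_neg h, if_pos h2, hinv2]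
  right_inv := by
    intro z
    dsimp only
    by_cases h : z ∈ C₀
    · have h2 : p2 z ∉ C₀ := (hc2 z).mp h
      rw [if_pos h, if_neg h2, hinv2]
    · have h2 : p1 z ∈ C₀ := by
        by_contra hc
        exact h ((hc1 z).mpr hc)
      rw [if_neg h, if_pos h2, hinv1]

section Perm
variable (C₀ : Set V) (p1 p2 : V → V) (hinv1 : Function.Involutive p1)
    (hinv2 : Function.Involutive p2) (hc1 : ∀ z, z ∈ C₀ ↔ p1 z ∉ C₀)
    (hc2 : ∀ z, z ∈ C₀ ↔ p2 z ∉ C₀)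

lemma stepPerm_apply (z : V) : stepPerm C₀ p1 p2 hinv1 hinv2 hc1 hc2 z =
    if z ∈ C₀ then p1 z else p2 z := rfl

lemma stepPerm_symm_apply (z : V) : (stepPerm C₀ p1 p2 hinv1 hinv2 hc1 hc2)⁻¹ z =
    if z ∈ C₀ then p2 z else p1 z := rfl

lemma sameCycle_p1 (w z : V) (h : (stepPerm C₀ p1 p2 hinv1 hinv2 hc1 hc2).SameCycle w z) :
    (stepPerm C₀ p1 p2 hinv1 hinv2 hc1 hc2).SameCycle w (p1 z) := by
  set σ := stepPerm C₀ p1 p2 hinv1 hinv2 hc1 hc2 with hσ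
  by_cases hz : z ∈ C₀
  · have : p1 z = σ z := by rw [stepPerm_apply, if_pos hz]
    rw [this]
    exact (Perm.sameCycle_apply_right).mpr h
  · have : p1 z = σ⁻¹ z := by rw [stepPerm_symm_apply, if_neg hz]
    rw [this]
    exact (Perm.sameCycle_apply_right).mp (by rwa [← Perm.mul_apply, mul_inv_cancel, Perm.one_apply])

lemma sameCycle_p2 (w z : V) (h : (stepPerm C₀ p1 p2 hinv1 hinv2 hc1 hc2).SameCycle w z) :
    (stepPerm C₀ p1 p2 hinv1 hinv2 hc1 hc2).SameCycle w (p2 z) := by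
  set σ := stepPerm C₀ p1 p2 hinv1 hinv2 hc1 hc2 with hσ
  by_cases hz : z ∈ C₀
  · have : p2 z = σ⁻¹ z := by rw [stepPerm_symm_apply, if_pos hz]
    rw [this]
    exact (Perm.sameCycle_apply_right).mp (by rwa [← Perm.mul_apply, mul_inv_cancel, Perm.one_apply])
  · have : p2 z = σ z := by rw [stepPerm_apply, if_neg hz]
    rw [this]
    exact (Perm.sameCycle_apply_right).mpr h

/-- Swapping `p1` with `p2` along the cycle of `w` (which avoids `u`). -/
lemma caseA_pm (G : SimpleGraph V) (hadj1 : ∀ z, G.Adj z (p1 z))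
    (hadj2 : ∀ z, G.Adj z (p2 z)) (u w : V)
    (hw : ¬ (stepPerm C₀ p1 p2 hinv1 hinv2 hc1 hc2).SameCycle w u) :
    ∃ q : V → V, Function.Involutive q ∧ (∀ z, G.Adj z (q z)) ∧ q u = p1 u ∧
      q w = p2 w ∧ ∀ z, q z = p1 z ∨ q z = p2 z := by
  set σ := stepPerm C₀ p1 p2 hinv1 hinv2 hc1 hc2 with hσ
  refine ⟨fun z => if σ.SameCycle w z then p2 z else p1 z, ?_, ?_, ?_, ?_, ?_⟩
  · intro z
    dsimp only
    by_cases h : σ.SameCycle w z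
    · rw [if_pos h, if_pos (sameCycle_p2 C₀ p1 p2 hinv1 hinv2 hc1 hc2 w z h), hinv2]
    · rw [if_neg h, if_neg, hinv1]
      intro hc
      have := sameCycle_p1 C₀ p1 p2 hinv1 hinv2 hc1 hc2 w (p1 z) hc
      rw [hinv1] at this
      exact h this
  · intro z
    dsimp only
    by_cases h : σ.SameCycle w z
    · rw [if_pos h]; exact hadj2 z
    · rw [if_neg h]; exact hadj1 z
  · dsimp only
    rw [if_neg hw]
  · dsimp only
    rw [if_pos (Equiv.Perm.SameCycle.refl σ w)]
  · intro z
    dsimp only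
    by_cases h : σ.SameCycle w z
    · rw [if_pos h]; right; rfl
    · rw [if_neg h]; left; rfl

end Perm


/-- Arc-swap involution on indices. -/
def gSW (i j : ℕ) : ℕ → ℕ := fun t =>
  if t = i then j else if t = j then i
  else if i < t ∧ t < j then (if t % 2 = 1 then t + 1 else t - 1)
  else (if t % 2 = 0 then t + 1 else t - 1)

section gSW
variable (N i j : ℕ) (hN : N % 2 = 0) (hi : i % 2 = 0) (hj : j % 2 = 1)
  (h2 : 2 ≤ i) (hij : i + 1 < j) (hjN : j < N)

include hN hi hj h2 hij hjN in
lemma gSW_cases : ∀ t, t < N →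
    (t = i ∧ gSW i j t = j) ∨ (t = j ∧ gSW i j t = i) ∨
    (i < t ∧ t < j ∧ t % 2 = 1 ∧ gSW i j t = t + 1) ∨
    (i < t ∧ t < j ∧ t % 2 = 0 ∧ gSW i j t = t - 1) ∨
    (t ≠ i ∧ t ≠ j ∧ ¬(i < t ∧ t < j) ∧ t % 2 = 0 ∧ gSW i j t = t + 1) ∨
    (t ≠ i ∧ t ≠ j ∧ ¬(i < t ∧ t < j) ∧ t % 2 = 1 ∧ gSW i j t = t - 1) := by
  intro t ht
  simp only [gSW]
  split_ifs <;> omega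

include hN hi hj h2 hij hjN in
lemma gSW_lt : ∀ t, t < N → gSW i j t < N := by
  intro t ht
  rcases gSW_cases N i j hN hi hj h2 hij hjN t ht with
    ⟨h1, hv⟩ | ⟨h1, hv⟩ | ⟨a1, a2, a3, hv⟩ | ⟨a1, a2, a3, hv⟩ |
    ⟨a1, a2, a3, a4, hv⟩ | ⟨a1, a2, a3, a4, hv⟩ <;> omega

include hN hi hj h2 hij hjN in
lemma gSW_invol : ∀ t, t < N → gSW i j (gSW i j t) = t := by
  intro t ht
  have hb := gSW_lt N i j hN hi hj h2 hij hjN t ht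
  rcases gSW_cases N i j hN hi hj h2 hij hjN t ht with
    ⟨h1, hv⟩ | ⟨h1, hv⟩ | ⟨a1, a2, a3, hv⟩ | ⟨a1, a2, a3, hv⟩ |
    ⟨a1, a2, a3, a4, hv⟩ | ⟨a1, a2, a3, a4, hv⟩ <;>
  rw [hv] at hb ⊢ <;>
  rcases gSW_cases N i j hN hi hj h2 hij hjN _ hb with
    ⟨g1, gv⟩ | ⟨g1, gv⟩ | ⟨g1, g2, g3', gv⟩ | ⟨g1, g2, g3', gv⟩ |
    ⟨g1, g2, g3', g4, gv⟩ | ⟨g1, g2, g3', g4, gv⟩ <;> omega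

include hN hi hj h2 hij hjN in
lemma gSW_at_0 : gSW i j 0 = 1 := by
  rcases gSW_cases N i j hN hi hj h2 hij hjN 0 (by omega) with
    ⟨h1, hv⟩ | ⟨h1, hv⟩ | ⟨a1, a2, a3, hv⟩ | ⟨a1, a2, a3, hv⟩ |
    ⟨a1, a2, a3, a4, hv⟩ | ⟨a1, a2, a3, a4, hv⟩ <;> omega

end gSW

lemma gSW_at_i (i j : ℕ) : gSW i j i = j := by simp [gSW]

/-- The two-chord re-matching used in the forced case. -/
def g3 (N : ℕ) : ℕ → ℕ := fun t =>
  if t = 0 then 1 else if t = 1 then 0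
  else if t = 2 then N - 1 else if t = N - 1 then 2
  else if t = 3 then 6 else if t = 6 then 3
  else if t = 4 then 5 else if t = 5 then 4
  else if t % 2 = 1 then t + 1 else t - 1

section g3
variable (N : ℕ) (hN : N % 2 = 0) (hN8 : 8 ≤ N)

lemma g3_at_0 : g3 N 0 = 1 := by simp [g3]

lemma g3_at_1 : g3 N 1 = 0 := by simp [g3]

include hN8 in
lemma g3_at_2 : g3 N 2 = N - 1 := by
  simp only [g3]
  rw [if_neg (by omega), if_neg (by omega), if_pos trivial]

include hN8 in
lemma g3_at_last : g3 N (N - 1) = 2 := by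
  simp only [g3]
  rw [if_neg (by omega), if_neg (by omega), if_neg (by omega), if_pos trivial]

include hN8 in
lemma g3_at_3 : g3 N 3 = 6 := by
  simp only [g3]
  rw [if_neg (by omega), if_neg (by omega), if_neg (by omega), if_neg (by omega), if_pos trivial]

include hN8 in
lemma g3_at_6 : g3 N 6 = 3 := by
  simp only [g3]
  rw [if_neg (by omega), if_neg (by omega), if_neg (by omega), if_neg (by omega),
    if_neg (by omega), if_pos trivial]

include hN8 in
lemma g3_at_4 : g3 N 4 = 5 := by
  simp only [g3]
  rw [if_neg (by omega), if_neg (by omega), if_neg (by omega), if_neg (by omega),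
    if_neg (by omega), if_neg (by omega), if_pos trivial]

include hN8 in
lemma g3_at_5 : g3 N 5 = 4 := by
  simp only [g3]
  rw [if_neg (by omega), if_neg (by omega), if_neg (by omega), if_neg (by omega),
    if_neg (by omega), if_neg (by omega), if_neg (by omega), if_pos trivial]

include hN8 in
lemma g3_res (t : ℕ) (h7 : 7 ≤ t) (htN : t ≠ N - 1) :
    g3 N t = if t % 2 = 1 then t + 1 else t - 1 := by
  simp only [g3]
  rw [if_neg (by omega), if_neg (by omega), if_neg (by omega), if_neg htN,
    if_neg (by omega), if_neg (by omega), if_neg (by omega), if_neg (by omega)]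

include hN hN8 in
lemma g3_cases : ∀ t, t < N →
    (t = 0 ∧ g3 N t = 1) ∨ (t = 1 ∧ g3 N t = 0) ∨
    (t = 2 ∧ g3 N t = N - 1) ∨ (t = N - 1 ∧ g3 N t = 2) ∨
    (t = 3 ∧ g3 N t = 6) ∨ (t = 6 ∧ g3 N t = 3) ∨
    (t = 4 ∧ g3 N t = 5) ∨ (t = 5 ∧ g3 N t = 4) ∨
    (7 ≤ t ∧ t < N - 1 ∧ t % 2 = 1 ∧ g3 N t = t + 1) ∨
    (8 ≤ t ∧ t ≤ N - 2 ∧ t % 2 = 0 ∧ g3 N t = t - 1) := by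
  intro t ht
  by_cases h0 : t = 0
  · subst h0; exact Or.inl ⟨rfl, g3_at_0 N⟩
  by_cases h1 : t = 1
  · subst h1; exact Or.inr (Or.inl ⟨rfl, g3_at_1 N⟩)
  by_cases h2 : t = 2
  · subst h2; exact Or.inr (Or.inr (Or.inl ⟨rfl, g3_at_2 N hN8⟩))
  by_cases hL : t = N - 1
  · subst hL
    exact Or.inr (Or.inr (Or.inr (Or.inl ⟨rfl, g3_at_last N hN8⟩)))
  by_cases h3 : t = 3
  · subst h3; exact Or.inr (Or.inr (Or.inr (Or.inr (Or.inl ⟨rfl, g3_at_3 N hN8⟩))))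
  by_cases h6 : t = 6
  · subst h6
    exact Or.inr (Or.inr (Or.inr (Or.inr (Or.inr (Or.inl ⟨rfl, g3_at_6 N hN8⟩)))))
  by_cases h4 : t = 4
  · subst h4
    exact Or.inr (Or.inr (Or.inr (Or.inr (Or.inr (Or.inr (Or.inl ⟨rfl, g3_at_4 N hN8⟩))))))
  by_cases h5 : t = 5
  · subst h5
    exact Or.inr (Or.inr (Or.inr (Or.inr (Or.inr (Or.inr (Or.inr
      (Or.inl ⟨rfl, g3_at_5 N hN8⟩)))))))
  have h7 : 7 ≤ t := by omega
  have hres := g3_res N hN8 t h7 hL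
  by_cases hpar : t % 2 = 1
  · rw [if_pos hpar] at hres
    exact Or.inr (Or.inr (Or.inr (Or.inr (Or.inr (Or.inr (Or.inr (Or.inr
      (Or.inl ⟨h7, by omega, hpar, hres⟩))))))))
  · rw [if_neg hpar] at hres
    exact Or.inr (Or.inr (Or.inr (Or.inr (Or.inr (Or.inr (Or.inr (Or.inr (Or.inr
      ⟨by omega, by omega, by omega, hres⟩))))))))

include hN hN8 in
lemma g3_lt : ∀ t, t < N → g3 N t < N := by
  intro t ht
  rcases g3_cases N hN hN8 t ht with
    ⟨h1, hv⟩ | ⟨h1, hv⟩ | ⟨h1, hv⟩ | ⟨h1, hv⟩ | ⟨h1, hv⟩ | ⟨h1, hv⟩ | ⟨h1, hv⟩ | ⟨h1, hv⟩ |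
    ⟨a1, a2, a3, hv⟩ | ⟨a1, a2, a3, hv⟩ <;> omega

include hN hN8 in
lemma g3_invol : ∀ t, t < N → g3 N (g3 N t) = t := by
  intro t ht
  have hb := g3_lt N hN hN8 t ht
  rcases g3_cases N hN hN8 t ht with
    ⟨h1, hv⟩ | ⟨h1, hv⟩ | ⟨h1, hv⟩ | ⟨h1, hv⟩ | ⟨h1, hv⟩ | ⟨h1, hv⟩ | ⟨h1, hv⟩ | ⟨h1, hv⟩ |
    ⟨a1, a2, a3, hv⟩ | ⟨a1, a2, a3, hv⟩ <;>
  rw [hv] at hb ⊢ <;>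
  rcases g3_cases N hN hN8 _ hb with
    ⟨g1, gv⟩ | ⟨g1, gv⟩ | ⟨g1, gv⟩ | ⟨g1, gv⟩ | ⟨g1, gv⟩ | ⟨g1, gv⟩ | ⟨g1, gv⟩ | ⟨g1, gv⟩ |
    ⟨g1, g2, g3', gv⟩ | ⟨g1, g2, g3', gv⟩ <;> omega

end g3
set_option maxHeartbeats 1000000 in
/-- Case B: the alternating walk of `p1`, `p2` from `u` is Hamiltonian.  Then either some
chord gives two extra swaps, or the structure is forced and we use the two explicit
re-matchings.  Either way we obtain two further perfect matchings through `s(u, p1 u)`. -/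
lemma caseB_pm (G : SimpleGraph V) [Fintype V] (C₀ : Set V)
    (hbi : ∀ a b, G.Adj a b → (a ∈ C₀ ↔ b ∉ C₀))
    (p1 p2 p3 : V → V)
    (hinv1 : Function.Involutive p1) (hinv2 : Function.Involutive p2)
    (hinv3 : Function.Involutive p3)
    (hadj1 : ∀ z, G.Adj z (p1 z)) (hadj2 : ∀ z, G.Adj z (p2 z))
    (hadj3 : ∀ z, G.Adj z (p3 z))
    (h13 : ∀ z, p1 z ≠ p3 z) (h23 : ∀ z, p2 z ≠ p3 z)
    (u : V) (hu : u ∈ C₀)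
    (hc1 : ∀ z, z ∈ C₀ ↔ p1 z ∉ C₀) (hc2 : ∀ z, z ∈ C₀ ↔ p2 z ∉ C₀)
    (hspan : ∀ z, (stepPerm C₀ p1 p2 hinv1 hinv2 hc1 hc2).SameCycle u z)
    (hcard8 : 8 ≤ Fintype.card V) :
    ∃ q r : V → V,
      Function.Involutive q ∧ Function.Involutive r ∧
      (∀ z, G.Adj z (q z)) ∧ (∀ z, G.Adj z (r z)) ∧
      q u = p1 u ∧ r u = p1 u ∧
      (∃ z, p1 z ≠ q z) ∧ (∃ z, p1 z ≠ r z) ∧ (∃ z, q z ≠ r z) := by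
  classical
  set σ := stepPerm C₀ p1 p2 hinv1 hinv2 hc1 hc2 with hσdef
  set x : ℕ → V := fun i => (⇑σ)^[i] u with hxdef
  have hx0 : x 0 = u := rfl
  have hxs : ∀ i, x (i + 1) = σ (x i) := by
    intro i
    simp only [hxdef]
    rw [Function.iterate_succ_apply']
  have hσval : ∀ z, σ z = if z ∈ C₀ then p1 z else p2 z := fun z =>
    stepPerm_apply C₀ p1 p2 hinv1 hinv2 hc1 hc2 z
  have hadjx : ∀ i, G.Adj (x i) (x (i + 1)) := by
    intro i
    rw [hxs i, hσval]
    by_cases h : x i ∈ C₀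
    · rw [if_pos h]; exact hadj1 _
    · rw [if_neg h]; exact hadj2 _
  have hpar : ∀ i, (x i ∈ C₀ ↔ i % 2 = 0) := by
    intro i
    induction i with
    | zero => simpa [hx0] using hu
    | succ n ih =>
      have hcross : x n ∈ C₀ ↔ x (n + 1) ∉ C₀ := hbi _ _ (hadjx n)
      have h2 : x (n + 1) ∈ C₀ ↔ ¬(x n ∈ C₀) := by
        constructor
        · intro h hc
          exact hcross.mp hc h
        · intro h
          by_contra hc
          exact h (hcross.mpr hc)
      rw [h2, ih]
      omega
  have hstep0 : ∀ i, i % 2 = 0 → x (i + 1) = p1 (x i) := by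
    intro i h
    rw [hxs i, hσval, if_pos ((hpar i).mpr h)]
  have hstep1 : ∀ i, i % 2 = 1 → x (i + 1) = p2 (x i) := by
    intro i h
    rw [hxs i, hσval, if_neg (fun hc => by have := (hpar i).mp hc; omega)]
  -- minimal period is the number of vertices
  have hper0 : Function.IsPeriodicPt ⇑σ (orderOf σ) u := by
    show (⇑σ)^[orderOf σ] u = u
    rw [Equiv.Perm.iterate_eq_pow, pow_orderOf_eq_one]
    rfl
  have hordpos : 0 < orderOf σ := orderOf_pos σ
  set N := Function.minimalPeriod ⇑σ u with hNdef
  have hNpos : 0 < N := Function.IsPeriodicPt.minimalPeriod_pos hordpos hper0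
  have hxN : x N = u := Function.iterate_minimalPeriod
  have hinj : ∀ i, i < N → ∀ k, k < N → x i = x k → i = k := by
    intro i hi k hk hxe
    exact Function.iterate_injOn_Iio_minimalPeriod hi hk hxe
  have hmod : ∀ n, x (n % N) = x n := fun n => Function.iterate_mod_minimalPeriod_eq
  have hsurj : ∀ z, ∃ i, i < N ∧ x i = z := by
    intro z
    obtain ⟨k, -, hk⟩ := (hspan z).exists_pow_eq'
    refine ⟨k % N, Nat.mod_lt _ hNpos, ?_⟩
    rw [hmod k]
    show (⇑σ)^[k] u = z
    rw [Equiv.Perm.iterate_eq_pow]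
    exact hk
  have hNcard : N = Fintype.card V := by
    apply le_antisymm
    · have h1 : ((Finset.range N).image x).card = N := by
        rw [Finset.card_image_of_injOn (fun a ha b hb hab =>
          hinj a (Finset.mem_range.mp ha) b (Finset.mem_range.mp hb) hab)]
        exact Finset.card_range N
      rw [← h1]
      exact Finset.card_le_univ _
    · have hss : (Finset.univ : Finset V) ⊆ (Finset.range N).image x := by
        intro z _
        obtain ⟨i, hi, hxi⟩ := hsurj z
        exact Finset.mem_image.mpr ⟨i, Finset.mem_range.mpr hi, hxi⟩
      calc Fintype.card V = (Finset.univ : Finset V).card := rfl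
        _ ≤ ((Finset.range N).image x).card := Finset.card_le_card hss
        _ ≤ N := le_trans Finset.card_image_le (le_of_eq (Finset.card_range N))
  have hN8 : 8 ≤ N := by rw [hNcard]; exact hcard8
  have hNeven : N % 2 = 0 := (hpar N).mp (by rw [hxN]; exact hu)
  -- the index function
  set idx : V → ℕ := fun z => Classical.choose (hsurj z) with hidxdef
  have hidx_lt : ∀ z, idx z < N := fun z => (Classical.choose_spec (hsurj z)).1
  have hidx_x : ∀ z, x (idx z) = z := fun z => (Classical.choose_spec (hsurj z)).2
  have hxidx : ∀ i, i < N → idx (x i) = i := by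
    intro i hi
    exact hinj _ (hidx_lt _) _ hi (hidx_x (x i))
  -- the generic re-matching gadget
  have hgadget : ∀ g : ℕ → ℕ, (∀ t, t < N → g t < N) → (∀ t, t < N → g (g t) = t) →
      (∀ t, t < N → G.Adj (x t) (x (g t))) →
      ∃ q : V → V, Function.Involutive q ∧ (∀ z, G.Adj z (q z)) ∧
        (∀ t, t < N → q (x t) = x (g t)) := by
    intro g hglt hginv hgadj
    refine ⟨fun z => x (g (idx z)), ?_, ?_, ?_⟩
    · intro z
      dsimp only
      rw [hxidx _ (hglt _ (hidx_lt z)), hginv _ (hidx_lt z), hidx_x]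
    · intro z
      dsimp only
      have h := hgadj (idx z) (hidx_lt z)
      rwa [hidx_x z] at h
    · intro t ht
      dsimp only
      rw [hxidx t ht]
  have hx1p1 : x 1 = p1 u := by
    have h := hstep0 0 (by omega)
    rwa [hx0] at h
  -- the chord function
  set τ : ℕ → ℕ := fun i => idx (p3 (x i)) with hτdef
  have hτx : ∀ i, x (τ i) = p3 (x i) := fun i => hidx_x _
  have hτlt : ∀ i, τ i < N := fun i => hidx_lt _
  have hτadj : ∀ i, G.Adj (x i) (x (τ i)) := by
    intro i
    rw [hτx]
    exact hadj3 _
  have hτodd : ∀ i, i % 2 = 0 → τ i % 2 = 1 := by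
    intro i hi
    have hcross : x i ∈ C₀ ↔ p3 (x i) ∉ C₀ := hbi _ _ (hadj3 (x i))
    have h1 : p3 (x i) ∉ C₀ := hcross.mp ((hpar i).mpr hi)
    have h2 : ¬ (τ i % 2 = 0) := by
      intro hc
      exact h1 (by rw [← hτx]; exact (hpar (τ i)).mpr hc)
    omega
  have hτeven : ∀ i, i % 2 = 1 → τ i % 2 = 0 := by
    intro i hi
    have hcross : x i ∈ C₀ ↔ p3 (x i) ∉ C₀ := hbi _ _ (hadj3 (x i))
    have h1 : x i ∉ C₀ := fun hc => by have := (hpar i).mp hc; omega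
    have h2 : p3 (x i) ∈ C₀ := by
      by_contra hc
      exact h1 (hcross.mpr hc)
    apply (hpar (τ i)).mp
    rw [hτx]
    exact h2
  have hτinv : ∀ i, i < N → τ (τ i) = i := by
    intro i hi
    have h1 : p3 (x (τ i)) = x i := by rw [hτx i, hinv3]
    show idx (p3 (x (τ i))) = i
    rw [h1, hxidx i hi]
  have hτne1 : ∀ i, i % 2 = 0 → τ i ≠ i + 1 := by
    intro i hpe hc
    apply h13 (x i)
    rw [← hstep0 i hpe, ← hc]
    exact hτx i
  have hτne2 : ∀ i, i % 2 = 0 → 1 ≤ i → τ i ≠ i - 1 := by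
    intro i hpe h1 hc
    have hodd : (i - 1) % 2 = 1 := by omega
    have hstep : x i = p2 (x (i - 1)) := by
      have h := hstep1 (i - 1) hodd
      rwa [show i - 1 + 1 = i by omega] at h
    have hp2 : p2 (x i) = x (i - 1) := by rw [hstep, hinv2]
    apply h23 (x i)
    rw [hp2, ← hc]
    exact hτx i
  have hτ0 : τ 0 ≠ N - 1 := by
    intro hc
    have hodd : (N - 1) % 2 = 1 := by omega
    have hstep : x N = p2 (x (N - 1)) := by
      have h := hstep1 (N - 1) hodd
      rwa [show N - 1 + 1 = N by omega] at h
    have hp2 : p2 (x 0) = x (N - 1) := by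
      rw [hx0, ← hxN, hstep, hinv2]
    apply h23 (x 0)
    rw [hp2, ← hc]
    exact hτx 0
  -- the case analysis
  by_cases hbad : ∃ jj, jj < N ∧ jj % 2 = 0 ∧ 4 ≤ jj ∧ jj < τ jj
  · -- two "bad" chords: swap along each
    obtain ⟨j, hjN, hjpar, hj4, hjbad⟩ := hbad
    have h2N : (2 : ℕ) < N := by omega
    have hτ2odd : τ 2 % 2 = 1 := hτodd 2 (by omega)
    have hτ2ne1 : τ 2 ≠ 2 - 1 := hτne2 2 (by omega) (by omega)
    have hτ2ne3 : τ 2 ≠ 2 + 1 := hτne1 2 (by omega)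
    have hτ2lt : τ 2 < N := hτlt 2
    have hτ2ge : 2 + 1 < τ 2 := by omega
    have hτjodd : τ j % 2 = 1 := hτodd j hjpar
    have hτjne1 : τ j ≠ j + 1 := hτne1 j hjpar
    have hτjne2 : τ j ≠ j - 1 := hτne2 j hjpar (by omega)
    have hτjlt : τ j < N := hτlt j
    have hτjge : j + 1 < τ j := by omega
    have hadjSW : ∀ (i : ℕ), i % 2 = 0 → 2 ≤ i → i + 1 < τ i → ∀ t, t < N →
        G.Adj (x t) (x (gSW i (τ i) t)) := by
      intro i hie hi2 hige t ht
      rcases gSW_cases N i (τ i) hNeven hie (hτodd i hie) hi2 hige (hτlt i) t ht with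
        ⟨h1, hv⟩ | ⟨h1, hv⟩ | ⟨a1, a2, a3, hv⟩ | ⟨a1, a2, a3, hv⟩ |
        ⟨a1, a2, a3, a4, hv⟩ | ⟨a1, a2, a3, a4, hv⟩
      · rw [hv, h1]; exact hτadj i
      · rw [hv, h1]; exact (hτadj i).symm
      · rw [hv]; exact hadjx t
      · rw [hv]
        have h := (hadjx (t - 1)).symm
        rwa [show t - 1 + 1 = t by omega] at h
      · rw [hv]; exact hadjx t
      · rw [hv]
        have h := (hadjx (t - 1)).symm
        rwa [show t - 1 + 1 = t by omega] at h
    obtain ⟨q, hqinv, hqadj, hqval⟩ := hgadget (gSW 2 (τ 2))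
      (gSW_lt N 2 (τ 2) hNeven (by omega) hτ2odd (by omega) hτ2ge hτ2lt)
      (gSW_invol N 2 (τ 2) hNeven (by omega) hτ2odd (by omega) hτ2ge hτ2lt)
      (hadjSW 2 (by omega) (by omega) hτ2ge)
    obtain ⟨r, hrinv, hradj, hrval⟩ := hgadget (gSW j (τ j))
      (gSW_lt N j (τ j) hNeven hjpar hτjodd (by omega) hτjge hτjlt)
      (gSW_invol N j (τ j) hNeven hjpar hτjodd (by omega) hτjge hτjlt)
      (hadjSW j hjpar (by omega) hτjge)
    have hq_u : q u = p1 u := by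
      have h0 := hqval 0 (by omega)
      rw [hx0] at h0
      rw [h0, gSW_at_0 N 2 (τ 2) hNeven (by omega) hτ2odd (by omega) hτ2ge hτ2lt, hx1p1]
    have hr_u : r u = p1 u := by
      have h0 := hrval 0 (by omega)
      rw [hx0] at h0
      rw [h0, gSW_at_0 N j (τ j) hNeven hjpar hτjodd (by omega) hτjge hτjlt, hx1p1]
    have hd1 : p1 (x 2) ≠ q (x 2) := by
      have hq2 : q (x 2) = x (τ 2) := by rw [hqval 2 (by omega), gSW_at_i]
      have hp12 : p1 (x 2) = x 3 := (hstep0 2 (by omega)).symm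
      rw [hp12, hq2]
      intro hc
      have := hinj 3 (by omega) (τ 2) hτ2lt hc
      omega
    have hd2 : p1 (x j) ≠ r (x j) := by
      have hrj : r (x j) = x (τ j) := by rw [hrval j hjN, gSW_at_i]
      have hp1j : p1 (x j) = x (j + 1) := (hstep0 j hjpar).symm
      rw [hp1j, hrj]
      intro hc
      have := hinj (j + 1) (by omega) (τ j) hτjlt hc
      omega
    have hd3 : q (x j) ≠ r (x j) := by
      have hrj : r (x j) = x (τ j) := by rw [hrval j hjN, gSW_at_i]
      have hor : gSW 2 (τ 2) j = j + 1 ∨ gSW 2 (τ 2) j = j - 1 := by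
        rcases gSW_cases N 2 (τ 2) hNeven (by omega) hτ2odd (by omega) hτ2ge hτ2lt j hjN with
          ⟨h1, hv⟩ | ⟨h1, hv⟩ | ⟨a1, a2, a3, hv⟩ | ⟨a1, a2, a3, hv⟩ |
          ⟨a1, a2, a3, a4, hv⟩ | ⟨a1, a2, a3, a4, hv⟩ <;> omega
      have hqj := hqval j hjN
      rcases hor with h | h <;> rw [h] at hqj <;> rw [hqj, hrj] <;> intro hc
      · have := hinj (j + 1) (by omega) (τ j) hτjlt hc
        omega
      · have := hinj (j - 1) (by omega) (τ j) hτjlt hc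
        omega
    exact ⟨q, r, hqinv, hrinv, hqadj, hradj, hq_u, hr_u,
      ⟨x 2, hd1⟩, ⟨x j, hd2⟩, ⟨x j, hd3⟩⟩
  · -- the forced case
    push_neg at hbad
    have hgood : ∀ jj, jj < N → jj % 2 = 0 → 4 ≤ jj → τ jj < jj := by
      intro jj h1 h2' h3
      have h4 := hbad jj h1 h2' h3
      have h5 := hτodd jj h2'
      omega
    have hτ4 : τ 4 = 1 := by
      have h1 := hgood 4 (by omega) (by omega) (by omega)
      have h2' := hτne2 4 (by omega) (by omega)
      have h3 := hτodd 4 (by omega)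
      omega
    have hτ6 : τ 6 = 3 := by
      have h1 := hgood 6 (by omega) (by omega) (by omega)
      have h2' := hτne2 6 (by omega) (by omega)
      have h3 := hτodd 6 (by omega)
      by_contra hc
      have hτ61 : τ 6 = 1 := by omega
      have e1 : p3 (x 6) = x 1 := by rw [← hτ61]; exact (hτx 6).symm
      have e2 : p3 (x 4) = x 1 := by rw [← hτ4]; exact (hτx 4).symm
      have e3 : x 6 = x 4 := by
        have h := congrArg p3 (e1.trans e2.symm)
        rwa [hinv3, hinv3] at h
      have := hinj 6 (by omega) 4 (by omega) e3
      omega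
    have hτ2 : τ 2 = N - 1 := by
      have hjN' : τ (N - 1) < N := hτlt _
      have hjpar' : τ (N - 1) % 2 = 0 := hτeven (N - 1) (by omega)
      have hji : τ (τ (N - 1)) = N - 1 := hτinv (N - 1) (by omega)
      have hjne0 : τ (N - 1) ≠ 0 := by
        intro hc
        apply hτ0
        rw [← hc]
        exact hji
      have hjlt4 : ¬ (4 ≤ τ (N - 1)) := by
        intro hge
        have := hgood (τ (N - 1)) hjN' hjpar' hge
        omega
      have hj2 : τ (N - 1) = 2 := by omega
      rw [← hj2]
      exact hji
    have hchord2 : G.Adj (x 2) (x (N - 1)) := by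
      have h := hτadj 2
      rwa [hτ2] at h
    have hchord6 : G.Adj (x 6) (x 3) := by
      have h := hτadj 6
      rwa [hτ6] at h
    obtain ⟨q, hqinv, hqadj, hqval⟩ := hgadget (gSW 2 (N - 1))
      (gSW_lt N 2 (N - 1) hNeven (by omega) (by omega) (by omega) (by omega) (by omega))
      (gSW_invol N 2 (N - 1) hNeven (by omega) (by omega) (by omega) (by omega) (by omega))
      (by
        intro t ht
        rcases gSW_cases N 2 (N - 1) hNeven (by omega) (by omega) (by omega) (by omega)
          (by omega) t ht with
          ⟨h1, hv⟩ | ⟨h1, hv⟩ | ⟨a1, a2, a3, hv⟩ | ⟨a1, a2, a3, hv⟩ |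
          ⟨a1, a2, a3, a4, hv⟩ | ⟨a1, a2, a3, a4, hv⟩
        · rw [hv, h1]; exact hchord2
        · rw [hv, h1]; exact hchord2.symm
        · rw [hv]; exact hadjx t
        · rw [hv]
          have h := (hadjx (t - 1)).symm
          rwa [show t - 1 + 1 = t by omega] at h
        · rw [hv]; exact hadjx t
        · rw [hv]
          have h := (hadjx (t - 1)).symm
          rwa [show t - 1 + 1 = t by omega] at h)
    obtain ⟨r, hrinv, hradj, hrval⟩ := hgadget (g3 N)
      (g3_lt N hNeven hN8) (g3_invol N hNeven hN8)
      (by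
        intro t ht
        rcases g3_cases N hNeven hN8 t ht with
          ⟨h1, hv⟩ | ⟨h1, hv⟩ | ⟨h1, hv⟩ | ⟨h1, hv⟩ | ⟨h1, hv⟩ | ⟨h1, hv⟩ | ⟨h1, hv⟩ |
          ⟨h1, hv⟩ | ⟨a1, a2, a3, hv⟩ | ⟨a1, a2, a3, hv⟩
        · rw [hv, h1]; exact hadjx 0
        · rw [hv, h1]; exact (hadjx 0).symm
        · rw [hv, h1]; exact hchord2
        · rw [hv, h1]; exact hchord2.symm
        · rw [hv, h1]; exact hchord6.symm
        · rw [hv, h1]; exact hchord6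
        · rw [hv, h1]; exact hadjx 4
        · rw [hv, h1]; exact (hadjx 4).symm
        · rw [hv]; exact hadjx t
        · rw [hv]
          have h := (hadjx (t - 1)).symm
          rwa [show t - 1 + 1 = t by omega] at h)
    have hq_u : q u = p1 u := by
      have h0 := hqval 0 (by omega)
      rw [hx0] at h0
      rw [h0, gSW_at_0 N 2 (N - 1) hNeven (by omega) (by omega) (by omega) (by omega)
        (by omega), hx1p1]
    have hr_u : r u = p1 u := by
      have h0 := hrval 0 (by omega)
      rw [hx0] at h0
      rw [h0, g3_at_0 N, hx1p1]
    have hp13 : p1 (x 3) = x 2 := by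
      have h32 : x 3 = p1 (x 2) := hstep0 2 (by omega)
      rw [h32, hinv1]
    have hq3 : q (x 3) = x 4 := by
      rw [hqval 3 (by omega)]
      congr 1
      rcases gSW_cases N 2 (N - 1) hNeven (by omega) (by omega) (by omega) (by omega)
        (by omega) 3 (by omega) with
        ⟨h1, hv⟩ | ⟨h1, hv⟩ | ⟨a1, a2, a3, hv⟩ | ⟨a1, a2, a3, hv⟩ |
        ⟨a1, a2, a3, a4, hv⟩ | ⟨a1, a2, a3, a4, hv⟩ <;> omega
    have hr3 : r (x 3) = x 6 := by
      rw [hrval 3 (by omega), g3_at_3 N hN8]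
    have hd1 : p1 (x 3) ≠ q (x 3) := by
      rw [hp13, hq3]
      intro hc
      have := hinj 2 (by omega) 4 (by omega) hc
      omega
    have hd2 : p1 (x 3) ≠ r (x 3) := by
      rw [hp13, hr3]
      intro hc
      have := hinj 2 (by omega) 6 (by omega) hc
      omega
    have hd3 : q (x 3) ≠ r (x 3) := by
      rw [hq3, hr3]
      intro hc
      have := hinj 4 (by omega) 6 (by omega) hc
      omega
    exact ⟨q, r, hqinv, hrinv, hqadj, hradj, hq_u, hr_u,
      ⟨x 3, hd1⟩, ⟨x 3, hd2⟩, ⟨x 3, hd3⟩⟩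


end TripleAux

open TripleAux

/-- In a cyclically 4-edge-connected cubic bipartite graph with at least 8 vertices,
every edge is contained in at least three perfect matchings. -/
theorem cyclically4_bipartite_triple_covered
    [Fintype V] (G : SimpleGraph V) (hcubic : CubicGraph G)
    (hC4 : CyclicallyEdgeConnected G 4)
    (hbip : ∃ C : Set V, ∀ x y, G.Adj x y → (x ∈ C ↔ y ∉ C))
    (hcard : 8 ≤ Fintype.card V) :
    ∀ e ∈ G.edgeSet, 3 ≤ {M : Set (Sym2 V) | IsPM G M ∧ e ∈ M}.ncard := by

  classical
  intro e
  induction e using Sym2.ind with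
  | _ a b =>
  intro he
  have hab : G.Adj a b := G.mem_edgeSet.mp he
  obtain ⟨C, hC⟩ := hbip
  have hdeg : ∀ z, G.degree z = 3 := by
    intro z
    have h := hcubic z
    rwa [Set.ncard_eq_toFinset_card', ← SimpleGraph.neighborFinset_def,
      SimpleGraph.card_neighborFinset_eq_degree] at h
  obtain ⟨C₀, hbi, ha⟩ : ∃ C₀ : Set V, (∀ x y, G.Adj x y → (x ∈ C₀ ↔ y ∉ C₀)) ∧ a ∈ C₀ := by
    by_cases ha : a ∈ C
    · exact ⟨C, hC, ha⟩
    · refine ⟨Cᶜ, ?_, ha⟩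
      intro x y hxy
      have := hC x y hxy
      simp only [Set.mem_compl_iff]
      tauto
  obtain ⟨p1, p2, p3, hinv1, hinv2, hinv3, hadj1, hadj2, hadj3, hp1u, h12, h13, h23⟩ :=
    exists_setup G C₀ hbi hdeg a b ha hab
  have hc1 : ∀ z, z ∈ C₀ ↔ p1 z ∉ C₀ := fun z => hbi z _ (hadj1 z)
  have hc2 : ∀ z, z ∈ C₀ ↔ p2 z ∉ C₀ := fun z => hbi z _ (hadj2 z)
  have hc3 : ∀ z, z ∈ C₀ ↔ p3 z ∉ C₀ := fun z => hbi z _ (hadj3 z)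
  by_cases hA : ∀ z, (stepPerm C₀ p1 p2 hinv1 hinv2 hc1 hc2).SameCycle a z
  · obtain ⟨q, r, hqinv, hrinv, hqadj, hradj, hqu, hru, hd1, hd2, hd3⟩ :=
      caseB_pm G C₀ hbi p1 p2 p3 hinv1 hinv2 hinv3 hadj1 hadj2 hadj3 h13 h23 a ha
        hc1 hc2 hA hcard
    exact three_le_ncard G s(a, b) a b rfl p1 q r hinv1 hqinv hrinv hadj1 hqadj hradj
      hp1u (hqu.trans hp1u) (hru.trans hp1u) hd1 hd2 hd3
  · by_cases hB : ∀ z, (stepPerm C₀ p1 p3 hinv1 hinv3 hc1 hc3).SameCycle a z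
    · obtain ⟨q, r, hqinv, hrinv, hqadj, hradj, hqu, hru, hd1, hd2, hd3⟩ :=
        caseB_pm G C₀ hbi p1 p3 p2 hinv1 hinv3 hinv2 hadj1 hadj3 hadj2 h12
          (fun z => (h23 z).symm) a ha hc1 hc3 hB hcard
      exact three_le_ncard G s(a, b) a b rfl p1 q r hinv1 hqinv hrinv hadj1 hqadj hradj
        hp1u (hqu.trans hp1u) (hru.trans hp1u) hd1 hd2 hd3
    · obtain ⟨w, hw⟩ := not_forall.mp hA
      obtain ⟨w', hw'⟩ := not_forall.mp hB
      obtain ⟨q, hqinv, hqadj, hq_u, hq_w, hq_or⟩ :=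
        caseA_pm C₀ p1 p2 hinv1 hinv2 hc1 hc2 G hadj1 hadj2 a w (fun hc => hw hc.symm)
      obtain ⟨r, hrinv, hradj, hr_u, hr_w, hr_or⟩ :=
        caseA_pm C₀ p1 p3 hinv1 hinv3 hc1 hc3 G hadj1 hadj3 a w' (fun hc => hw' hc.symm)
      refine three_le_ncard G s(a, b) a b rfl p1 q r hinv1 hqinv hrinv hadj1 hqadj hradj
        hp1u (hq_u.trans hp1u) (hr_u.trans hp1u) ⟨w, ?_⟩ ⟨w', ?_⟩ ⟨w, ?_⟩
      · rw [hq_w]; exact h12 w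
      · rw [hr_w]; exact h13 w'
      · rw [hq_w]
        rcases hr_or w with h | h <;> rw [h]
        · exact fun hc => h12 w hc.symm
        · exact h23 w
end

section
/- Every twisted net with n vertices has at least 2^(n/18 + 2/3) perfect matchings. -/
open SimpleGraph
open scoped Classical

universe u

variable {V : Type u}

/-! ### Auxiliary development -/

section Aux

/-- The target function `tf n = 2 ^ ((n + 12)/18)`. -/
noncomputable def tf (x : ℝ) : ℝ := (2 : ℝ) ^ ((x + 12) / 18)

lemma tf_pos (x : ℝ) : 0 < tf x := Real.rpow_pos_of_pos (by norm_num) _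

lemma tf_mono {x y : ℝ} (h : x ≤ y) : tf x ≤ tf y :=
  Real.rpow_le_rpow_of_exponent_le (by norm_num) (by linarith)

lemma tf_add_tf (x : ℝ) : tf x + tf x = tf (x + 18) := by
  unfold tf
  rw [show (x + 18 + 12) / 18 = (x + 12) / 18 + 1 by ring,
    Real.rpow_add (by norm_num), Real.rpow_one]
  ring

lemma tf_mul_tf (x y : ℝ) : tf x * tf y = tf (x + y + 12) := by
  unfold tf
  rw [← Real.rpow_add (by norm_num)]
  ring_nf

lemma tf_six : tf 6 = 2 := by
  unfold tf
  norm_num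

lemma tf_le_two {x : ℝ} (h : x ≤ 6) : tf x ≤ 2 := tf_six ▸ tf_mono h

lemma tf_eight_le : tf 8 ≤ 3 := by
  have h0 : tf 8 = (2 : ℝ) ^ ((10 : ℝ) / 9) := by unfold tf; norm_num
  rw [h0]
  by_contra hc
  push_neg at hc
  have h : ((2 : ℝ) ^ ((10 : ℝ) / 9)) ^ (9 : ℕ) = 2 ^ (10 : ℕ) := by
    rw [← Real.rpow_natCast ((2 : ℝ) ^ ((10 : ℝ) / 9)) 9,
      ← Real.rpow_mul (by norm_num)]
    norm_num
  have h2 := pow_lt_pow_left₀ hc (by norm_num : (0 : ℝ) ≤ 3) (by norm_num : (9 : ℕ) ≠ 0)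
  rw [h] at h2
  norm_num at h2

lemma tf_le_four {x : ℝ} (h : x ≤ 24) : tf x ≤ 4 := by
  have : tf 24 = 4 := by
    unfold tf
    rw [show ((24 : ℝ) + 12) / 18 = ((2 : ℕ) : ℝ) by norm_num, Real.rpow_natCast]
    norm_num
  calc tf x ≤ tf 24 := tf_mono h
  _ = 4 := this

section NcardTools

variable {α : Type*} {β : Type*} {γ : Type*}

lemma ncard_le_of_maps [Finite β] (A : Set α) (C : Set β) (f : α → β)
    (hinj : Set.InjOn f A) (hmaps : ∀ a ∈ A, f a ∈ C) : A.ncard ≤ C.ncard := by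
  calc A.ncard = (f '' A).ncard := (Set.ncard_image_of_injOn hinj).symm
  _ ≤ C.ncard := Set.ncard_le_ncard (by rintro _ ⟨a, ha, rfl⟩; exact hmaps a ha)
      (Set.toFinite _)

lemma ncard_add_le_of_maps [Finite β] (A B : Set α) (C : Set β) (f g : α → β)
    (hfinj : Set.InjOn f A) (hginj : Set.InjOn g B)
    (hf : ∀ a ∈ A, f a ∈ C) (hg : ∀ b ∈ B, g b ∈ C)
    (hdisj : ∀ a ∈ A, ∀ b ∈ B, f a ≠ g b) :
    A.ncard + B.ncard ≤ C.ncard := by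
  have h1 : (f '' A) ∪ (g '' B) ⊆ C := by
    rintro x (⟨a, ha, rfl⟩ | ⟨b, hb, rfl⟩)
    · exact hf a ha
    · exact hg b hb
  have h2 : Disjoint (f '' A) (g '' B) := by
    rw [Set.disjoint_left]
    rintro _ ⟨a, ha, rfl⟩ ⟨b, hb, hba⟩
    exact hdisj a ha b hb hba.symm
  calc A.ncard + B.ncard = (f '' A).ncard + (g '' B).ncard := by
        rw [Set.ncard_image_of_injOn hfinj, Set.ncard_image_of_injOn hginj]
  _ = ((f '' A) ∪ (g '' B)).ncard := (Set.ncard_union_eq h2 (Set.toFinite _) (Set.toFinite _)).symm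
  _ ≤ C.ncard := Set.ncard_le_ncard h1 (Set.toFinite _)

lemma ncard_mul_le_of_maps [Finite γ] (A : Set α) (B : Set β) (C : Set γ) (f : α → β → γ)
    (hinj : ∀ a₁ ∈ A, ∀ b₁ ∈ B, ∀ a₂ ∈ A, ∀ b₂ ∈ B, f a₁ b₁ = f a₂ b₂ → a₁ = a₂ ∧ b₁ = b₂)
    (hmaps : ∀ a ∈ A, ∀ b ∈ B, f a b ∈ C) :
    A.ncard * B.ncard ≤ C.ncard := by
  have h1 : Set.InjOn (fun p : α × β => f p.1 p.2) (A ×ˢ B) := by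
    rintro ⟨a₁, b₁⟩ hp1 ⟨a₂, b₂⟩ hp2 h
    rw [Set.mem_prod] at hp1 hp2
    obtain ⟨e1, e2⟩ := hinj a₁ hp1.1 b₁ hp1.2 a₂ hp2.1 b₂ hp2.2 h
    simp [e1, e2]
  have h2 : (A ×ˢ B).ncard = A.ncard * B.ncard := by
    rw [← Nat.card_coe_set_eq, ← Nat.card_coe_set_eq, ← Nat.card_coe_set_eq,
      Nat.card_congr (Equiv.Set.prod A B), Nat.card_prod]
  rw [← h2]
  exact ncard_le_of_maps _ _ _ h1 (by
    rintro ⟨a, b⟩ hp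
    rw [Set.mem_prod] at hp
    exact hmaps a hp.1 b hp.2)

end NcardTools

end Aux

section NPMLemmas

variable {G : SimpleGraph V}

/-- The number of matchings of `G[A]` missing exactly `X`. -/
noncomputable def npm [Fintype V] (G : SimpleGraph V) (A X : Set V) : ℕ :=
  {M : Set (Sym2 V) | IsNearPM G A X M}.ncard

lemma IsNearPM.avoid {A X : Set V} {M : Set (Sym2 V)} (h : IsNearPM G A X M)
    {e : Sym2 V} (he : e ∈ M) {z : V} (hz : z ∉ A) : z ∉ e := by
  obtain ⟨x, y, rfl, -, hx, hy⟩ := h.1 e he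
  intro hze
  rcases Sym2.mem_iff.mp hze with rfl | rfl
  · exact hz hx
  · exact hz hy

lemma IsNearPM.not_mem_left {A X : Set V} {M : Set (Sym2 V)} (h : IsNearPM G A X M)
    {z y : V} (hz : z ∉ A) : s(z, y) ∉ M :=
  fun hm => (h.avoid hm hz) (by simp)

lemma IsNearPM.not_mem_right {A X : Set V} {M : Set (Sym2 V)} (h : IsNearPM G A X M)
    {z y : V} (hz : z ∉ A) : s(y, z) ∉ M :=
  fun hm => (h.avoid hm hz) (by simp)

lemma insert_left_cancel {α : Type*} {a : α} {s t : Set α} (ha : a ∉ s) (hb : a ∉ t)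
    (h : insert a s = insert a t) : s = t := by
  rw [← Set.insert_diff_self_of_notMem ha, ← Set.insert_diff_self_of_notMem hb, h]

/-- L1: add the edge `vv'` to a matching on `st`. -/
lemma IsNearPM.add_pendant {st X : Set V} {v v' : V} (hv : v ∉ st) (hv' : v' ∉ st)
    (hadj : G.Adj v v') (hX : X ⊆ st) {M : Set (Sym2 V)} (h : IsNearPM G st X M) :
    IsNearPM G (st ∪ {v, v'}) X (insert s(v, v') M) := by
  refine ⟨?_, ?_, ?_⟩
  · rintro e (rfl | he)
    · exact ⟨v, v', rfl, hadj, Or.inr (by simp), Or.inr (by simp)⟩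
    · obtain ⟨x, y, rfl, ha, hx, hy⟩ := h.1 e he
      exact ⟨x, y, rfl, ha, Or.inl hx, Or.inl hy⟩
  · rintro w ⟨(hw | hw), hwX⟩
    · obtain ⟨e, ⟨heM, hwe⟩, huniq⟩ := h.2.1 w ⟨hw, hwX⟩
      refine ⟨e, ⟨Set.mem_insert_of_mem _ heM, hwe⟩, ?_⟩
      rintro e' ⟨(rfl | he'), hwe'⟩
      · exfalso
        rcases Sym2.mem_iff.mp hwe' with rfl | rfl
        · exact hv hw
        · exact hv' hw
      · exact huniq e' ⟨he', hwe'⟩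
    · simp only [Set.mem_insert_iff, Set.mem_singleton_iff] at hw
      refine ⟨s(v, v'), ⟨Set.mem_insert _ _, ?_⟩, ?_⟩
      · rcases hw with rfl | rfl <;> simp
      · rintro e' ⟨(rfl | he'), hwe'⟩
        · rfl
        · exfalso
          rcases hw with rfl | rfl
          · exact (h.avoid he' hv) hwe'
          · exact (h.avoid he' hv') hwe'
  · rintro w hwX e (rfl | he)
    · intro hwe
      rcases Sym2.mem_iff.mp hwe with rfl | rfl
      · exact hv (hX hwX)
      · exact hv' (hX hwX)
    · exact h.2.2 w hwX e he

/-- L2: add the edges `uv` and `u'v'`. -/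
lemma IsNearPM.add_two {st X : Set V} {u u' v v' : V} (hv : v ∉ st) (hv' : v' ∉ st)
    (hvv' : v ≠ v') (hu : u ∈ st) (hu' : u' ∈ st) (huu' : u ≠ u')
    (hauv : G.Adj u v) (hau'v' : G.Adj u' v') (hX : X ⊆ st) (hXu : u ∉ X) (hXu' : u' ∉ X)
    {M : Set (Sym2 V)} (h : IsNearPM G st (X ∪ {u, u'}) M) :
    IsNearPM G (st ∪ {v, v'}) X (insert s(u, v) (insert s(u', v') M)) := by
  have hMu : ∀ e ∈ M, u ∉ e := fun e he => h.2.2 u (Or.inr (by simp)) e he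
  have hMu' : ∀ e ∈ M, u' ∉ e := fun e he => h.2.2 u' (Or.inr (by simp)) e he
  refine ⟨?_, ?_, ?_⟩
  · rintro e (rfl | rfl | he)
    · exact ⟨u, v, rfl, hauv, Or.inl hu, Or.inr (by simp)⟩
    · exact ⟨u', v', rfl, hau'v', Or.inl hu', Or.inr (by simp)⟩
    · obtain ⟨x, y, rfl, ha, hx, hy⟩ := h.1 e he
      exact ⟨x, y, rfl, ha, Or.inl hx, Or.inl hy⟩
  · rintro w ⟨(hw | hw), hwX⟩
    · by_cases hwu : w = u
      · rw [hwu]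
        refine ⟨s(u, v), ⟨Set.mem_insert _ _, by simp⟩, ?_⟩
        rintro e' ⟨(rfl | rfl | he'), hwe'⟩
        · rfl
        · exfalso
          rcases Sym2.mem_iff.mp hwe' with rfl | rfl
          · exact huu' rfl
          · exact hv' (hwu ▸ hw)
        · exact absurd hwe' (hMu e' he')
      by_cases hwu' : w = u'
      · rw [hwu']
        refine ⟨s(u', v'), ⟨Set.mem_insert_of_mem _ (Set.mem_insert _ _), by simp⟩, ?_⟩
        rintro e' ⟨(rfl | rfl | he'), hwe'⟩
        · exfalso
          rcases Sym2.mem_iff.mp hwe' with rfl | rfl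
          · exact huu' rfl
          · exact hv (hwu' ▸ hw)
        · rfl
        · exact absurd hwe' (hMu' e' he')
      · obtain ⟨e, ⟨heM, hwe⟩, huniq⟩ := h.2.1 w ⟨hw, by
          rintro (hw1 | hw2)
          · exact hwX hw1
          · simp only [Set.mem_insert_iff, Set.mem_singleton_iff] at hw2
            rcases hw2 with rfl | rfl
            · exact hwu rfl
            · exact hwu' rfl⟩
        refine ⟨e, ⟨Set.mem_insert_of_mem _ (Set.mem_insert_of_mem _ heM), hwe⟩, ?_⟩
        rintro e' ⟨(rfl | rfl | he'), hwe'⟩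
        · exfalso
          rcases Sym2.mem_iff.mp hwe' with rfl | rfl
          · exact hwu rfl
          · exact hv hw
        · exfalso
          rcases Sym2.mem_iff.mp hwe' with rfl | rfl
          · exact hwu' rfl
          · exact hv' hw
        · exact huniq e' ⟨he', hwe'⟩
    · simp only [Set.mem_insert_iff, Set.mem_singleton_iff] at hw
      rcases hw with rfl | rfl
      · refine ⟨s(u, w), ⟨Set.mem_insert _ _, by simp⟩, ?_⟩
        rintro e' ⟨(rfl | rfl | he'), hwe'⟩
        · rfl
        · exfalso
          rcases Sym2.mem_iff.mp hwe' with rfl | rfl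
          · exact hv hu'
          · exact hvv' rfl
        · exact absurd hwe' (h.avoid he' hv)
      · refine ⟨s(u', w), ⟨Set.mem_insert_of_mem _ (Set.mem_insert _ _), by simp⟩, ?_⟩
        rintro e' ⟨(rfl | rfl | he'), hwe'⟩
        · exfalso
          rcases Sym2.mem_iff.mp hwe' with rfl | rfl
          · exact hv' hu
          · exact hvv' rfl
        · rfl
        · exact absurd hwe' (h.avoid he' hv')
  · rintro w hwX e (rfl | rfl | he)
    · intro hwe
      rcases Sym2.mem_iff.mp hwe with rfl | rfl
      · exact hXu hwX
      · exact hv (hX hwX)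
    · intro hwe
      rcases Sym2.mem_iff.mp hwe with rfl | rfl
      · exact hXu' hwX
      · exact hv' (hX hwX)
    · exact h.2.2 w (Or.inl hwX) e he

/-- L3: keep a matching, extend both the ground set and the missing set. -/
lemma IsNearPM.extend {st X Y : Set V} (hY : ∀ y ∈ Y, y ∉ st)
    {M : Set (Sym2 V)} (h : IsNearPM G st X M) :
    IsNearPM G (st ∪ Y) (X ∪ Y) M := by
  refine ⟨?_, ?_, ?_⟩
  · intro e he
    obtain ⟨x, y, rfl, ha, hx, hy⟩ := h.1 e he
    exact ⟨x, y, rfl, ha, Or.inl hx, Or.inl hy⟩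
  · rintro w ⟨(hw | hw), hwX⟩
    · exact h.2.1 w ⟨hw, fun hx => hwX (Or.inl hx)⟩
    · exact absurd (Or.inr hw) hwX
  · rintro w (hwX | hwY) e he
    · exact h.2.2 w hwX e he
    · exact h.avoid he (hY w hwY)

/-- L4: shift a missing corner `u'` to the new vertex `v`. -/
lemma IsNearPM.shift {st : Set V} {x u' v v' : V} (hv : v ∉ st) (hv' : v' ∉ st)
    (hvv' : v ≠ v') (hx : x ∈ st) (hu' : u' ∈ st) (hxu' : x ≠ u') (hadj : G.Adj u' v')
    {M : Set (Sym2 V)} (h : IsNearPM G st {x, u'} M) :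
    IsNearPM G (st ∪ {v, v'}) {x, v} (insert s(u', v') M) := by
  have hMx : ∀ e ∈ M, x ∉ e := fun e he => h.2.2 x (by simp) e he
  have hMu' : ∀ e ∈ M, u' ∉ e := fun e he => h.2.2 u' (by simp) e he
  refine ⟨?_, ?_, ?_⟩
  · rintro e (rfl | he)
    · exact ⟨u', v', rfl, hadj, Or.inl hu', Or.inr (by simp)⟩
    · obtain ⟨a, b, rfl, ha, hxa, hyb⟩ := h.1 e he
      exact ⟨a, b, rfl, ha, Or.inl hxa, Or.inl hyb⟩
  · rintro w ⟨(hw | hw), hwX⟩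
    · by_cases hwu' : w = u'
      · subst hwu'
        refine ⟨s(w, v'), ⟨Set.mem_insert _ _, by simp⟩, ?_⟩
        rintro e' ⟨(rfl | he'), hwe'⟩
        · rfl
        · exact absurd hwe' (hMu' e' he')
      · obtain ⟨e, ⟨heM, hwe⟩, huniq⟩ := h.2.1 w ⟨hw, by
          simp only [Set.mem_insert_iff, Set.mem_singleton_iff]
          rintro (rfl | rfl)
          · exact hwX (by simp)
          · exact hwu' rfl⟩
        refine ⟨e, ⟨Set.mem_insert_of_mem _ heM, hwe⟩, ?_⟩
        rintro e' ⟨(rfl | he'), hwe'⟩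
        · exfalso
          rcases Sym2.mem_iff.mp hwe' with rfl | rfl
          · exact hwu' rfl
          · exact hv' hw
        · exact huniq e' ⟨he', hwe'⟩
    · simp only [Set.mem_insert_iff, Set.mem_singleton_iff] at hw
      rcases hw with rfl | rfl
      · exact absurd (by simp : w ∈ ({x, w} : Set V)) hwX
      · refine ⟨s(u', w), ⟨Set.mem_insert _ _, by simp⟩, ?_⟩
        rintro e' ⟨(rfl | he'), hwe'⟩
        · rfl
        · exact absurd hwe' (h.avoid he' hv')
  · rintro w hw e (rfl | he)
    · simp only [Set.mem_insert_iff, Set.mem_singleton_iff] at hw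
      intro hwe
      rcases hw with rfl | rfl
      · rcases Sym2.mem_iff.mp hwe with rfl | rfl
        · exact hxu' rfl
        · exact hv' hx
      · rcases Sym2.mem_iff.mp hwe with rfl | rfl
        · exact hv hu'
        · exact hvv' rfl
    · simp only [Set.mem_insert_iff, Set.mem_singleton_iff] at hw
      rcases hw with rfl | rfl
      · exact hMx e he
      · exact h.avoid he hv

/-- L5: union of perfect matchings of disjoint parts. -/
lemma IsNearPM.union {st1 st2 : Set V} (hdisj : st1 ∩ st2 = ∅)
    {M1 M2 : Set (Sym2 V)} (h1 : IsNearPM G st1 ∅ M1) (h2 : IsNearPM G st2 ∅ M2) :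
    IsNearPM G (st1 ∪ st2) ∅ (M1 ∪ M2) := by
  have hd : ∀ z, z ∈ st1 → z ∉ st2 := by
    intro z h1z h2z
    have : z ∈ st1 ∩ st2 := ⟨h1z, h2z⟩
    rw [hdisj] at this
    exact this
  refine ⟨?_, ?_, ?_⟩
  · rintro e (he | he)
    · obtain ⟨x, y, rfl, ha, hx, hy⟩ := h1.1 e he
      exact ⟨x, y, rfl, ha, Or.inl hx, Or.inl hy⟩
    · obtain ⟨x, y, rfl, ha, hx, hy⟩ := h2.1 e he
      exact ⟨x, y, rfl, ha, Or.inr hx, Or.inr hy⟩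
  · rintro w ⟨(hw | hw), -⟩
    · obtain ⟨e, ⟨heM, hwe⟩, huniq⟩ := h1.2.1 w ⟨hw, by simp⟩
      refine ⟨e, ⟨Or.inl heM, hwe⟩, ?_⟩
      rintro e' ⟨(he' | he'), hwe'⟩
      · exact huniq e' ⟨he', hwe'⟩
      · exact absurd hwe' (h2.avoid he' (hd w hw))
    · obtain ⟨e, ⟨heM, hwe⟩, huniq⟩ := h2.2.1 w ⟨hw, by simp⟩
      refine ⟨e, ⟨Or.inr heM, hwe⟩, ?_⟩
      rintro e' ⟨(he' | he'), hwe'⟩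
      · exact absurd hwe' (h1.avoid he' (fun hw2 => hd w hw2 hw))
      · exact huniq e' ⟨he', hwe'⟩
  · rintro w hw
    exact absurd hw (Set.notMem_empty w)

end NPMLemmas

section Counting

variable [Fintype V] {G : SimpleGraph V}

lemma sym2_ne_of_ends {a b c d : V} (h1 : a ≠ c) (h2 : a ≠ d) : s(a, b) ≠ s(c, d) := by
  intro h
  rw [Sym2.eq_iff] at h
  rcases h with ⟨h', -⟩ | ⟨h', -⟩
  · exact h1 h'
  · exact h2 h'

/-- C1: `ν'(X) ≥ ν(X) + ν(X ∪ {u,u'})`. -/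
lemma npm_add_le {st X : Set V} {u u' v v' : V} (hv : v ∉ st) (hv' : v' ∉ st)
    (hvv' : v ≠ v') (hu : u ∈ st) (hu' : u' ∈ st) (huu' : u ≠ u')
    (havv' : G.Adj v v') (hauv : G.Adj u v) (hau'v' : G.Adj u' v')
    (hX : X ⊆ st) (hXu : u ∉ X) (hXu' : u' ∉ X) :
    npm G st X + npm G st (X ∪ {u, u'}) ≤ npm G (st ∪ {v, v'}) X := by
  have hneq : s(u, v) ≠ s(u', v') :=
    sym2_ne_of_ends huu' (fun h => hv' (h ▸ hu))
  apply ncard_add_le_of_maps _ _ _ (fun M => insert s(v, v') M)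
    (fun M => insert s(u, v) (insert s(u', v') M))
  · intro M1 h1 M2 h2 heq
    have h1' : IsNearPM G st X M1 := h1
    have h2' : IsNearPM G st X M2 := h2
    exact insert_left_cancel (h1'.not_mem_left hv) (h2'.not_mem_left hv) heq
  · intro M1 h1 M2 h2 heq
    have h1' : IsNearPM G st (X ∪ {u, u'}) M1 := h1
    have h2' : IsNearPM G st (X ∪ {u, u'}) M2 := h2
    have k1 : s(u, v) ∉ insert s(u', v') M1 := by
      rintro (h | h)
      · exact hneq h
      · exact h1'.not_mem_right hv h
    have k2 : s(u, v) ∉ insert s(u', v') M2 := by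
      rintro (h | h)
      · exact hneq h
      · exact h2'.not_mem_right hv h
    have := insert_left_cancel k1 k2 heq
    exact insert_left_cancel (h1'.not_mem_right hv') (h2'.not_mem_right hv') this
  · intro M hM
    have hM' : IsNearPM G st X M := hM
    exact hM'.add_pendant hv hv' havv' hX
  · intro M hM
    have hM' : IsNearPM G st (X ∪ {u, u'}) M := hM
    exact hM'.add_two hv hv' hvv' hu hu' huu' hauv hau'v' hX hXu hXu'
  · intro M1 h1 M2 h2 heq
    have h2' : IsNearPM G st (X ∪ {u, u'}) M2 := h2
    have : s(v, v') ∈ insert s(u, v) (insert s(u', v') M2) := by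
      rw [← heq]; exact Set.mem_insert _ _
    rcases this with h | h | h
    · rw [Sym2.eq_iff] at h
      rcases h with ⟨h', -⟩ | ⟨-, h'⟩
      · exact hv (by rw [h']; exact hu)
      · exact hv' (by rw [h']; exact hu)
    · rw [Sym2.eq_iff] at h
      rcases h with ⟨h', -⟩ | ⟨h', -⟩
      · exact hv (by rw [h']; exact hu')
      · exact hvv' h'
    · exact h2'.not_mem_left hv h

/-- C2: `ν'(X ∪ {v,v'}) ≥ ν(X)`. -/
lemma npm_le_extend {st X Y : Set V} (hY : ∀ y ∈ Y, y ∉ st) :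
    npm G st X ≤ npm G (st ∪ Y) (X ∪ Y) := by
  apply ncard_le_of_maps _ _ (fun M => M)
  · intro M1 _ M2 _ h
    exact h
  · intro M hM
    have hM' : IsNearPM G st X M := hM
    exact hM'.extend hY

/-- C3: `ν'({x,v}) ≥ ν({x,u'})`. -/
lemma npm_shift_le {st : Set V} {x u' v v' : V} (hv : v ∉ st) (hv' : v' ∉ st)
    (hvv' : v ≠ v') (hx : x ∈ st) (hu' : u' ∈ st) (hxu' : x ≠ u') (hadj : G.Adj u' v') :
    npm G st {x, u'} ≤ npm G (st ∪ {v, v'}) {x, v} := by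
  apply ncard_le_of_maps _ _ (fun M => insert s(u', v') M)
  · intro M1 h1 M2 h2 heq
    have h1' : IsNearPM G st {x, u'} M1 := h1
    have h2' : IsNearPM G st {x, u'} M2 := h2
    exact insert_left_cancel (h1'.not_mem_right hv') (h2'.not_mem_right hv') heq
  · intro M hM
    have hM' : IsNearPM G st {x, u'} M := hM
    exact hM'.shift hv hv' hvv' hx hu' hxu' hadj

/-- C5: multiplication. -/
lemma npm_mul_le {st1 st2 : Set V} (hdisj : st1 ∩ st2 = ∅) :
    npm G st1 ∅ * npm G st2 ∅ ≤ npm G (st1 ∪ st2) ∅ := by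
  have hd : ∀ z, z ∈ st1 → z ∉ st2 := by
    intro z h1z h2z
    have : z ∈ st1 ∩ st2 := ⟨h1z, h2z⟩
    rw [hdisj] at this
    exact this
  have key1 : ∀ (A B : Set (Sym2 V)), IsNearPM G st1 ∅ A → IsNearPM G st2 ∅ B →
      (A ∪ B) ∩ {e | ∃ z, z ∈ e ∧ z ∈ st1} = A := by
    intro A B hA hB
    apply Set.eq_of_subset_of_subset
    · rintro e ⟨(he | he), ⟨z, hze, hz1⟩⟩
      · exact he
      · exfalso
        by_cases hz2 : z ∈ st2
        · exact hd z hz1 hz2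
        · exact (hB.avoid he hz2) hze
    · intro e he
      obtain ⟨a, b, rfl, -, ha, -⟩ := hA.1 e he
      exact ⟨Or.inl he, ⟨a, by simp, ha⟩⟩
  have key2 : ∀ (A B : Set (Sym2 V)), IsNearPM G st1 ∅ A → IsNearPM G st2 ∅ B →
      (A ∪ B) ∩ {e | ∃ z, z ∈ e ∧ z ∈ st2} = B := by
    intro A B hA hB
    apply Set.eq_of_subset_of_subset
    · rintro e ⟨(he | he), ⟨z, hze, hz2⟩⟩
      · exfalso
        by_cases hz1 : z ∈ st1
        · exact hd z hz1 hz2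
        · exact (hA.avoid he hz1) hze
      · exact he
    · intro e he
      obtain ⟨a, b, rfl, -, ha, -⟩ := hB.1 e he
      exact ⟨Or.inr he, ⟨a, by simp, ha⟩⟩
  apply ncard_mul_le_of_maps _ _ _ (fun M1 M2 => M1 ∪ M2)
  · intro A1 hA1 B1 hB1 A2 hA2 B2 hB2 heq
    have hA1' : IsNearPM G st1 ∅ A1 := hA1
    have hB1' : IsNearPM G st2 ∅ B1 := hB1
    have hA2' : IsNearPM G st1 ∅ A2 := hA2
    have hB2' : IsNearPM G st2 ∅ B2 := hB2
    constructor
    · rw [← key1 A1 B1 hA1' hB1', ← key1 A2 B2 hA2' hB2', heq]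
    · rw [← key2 A1 B1 hA1' hB1', ← key2 A2 B2 hA2' hB2', heq]
  · intro A hA B hB
    have hA' : IsNearPM G st1 ∅ A := hA
    have hB' : IsNearPM G st2 ∅ B := hB
    exact hA'.union hdisj hB'

end Counting

section Invariant

variable [Fintype V]

/-- A valid family of corner pairs. -/
def PairsOf (c : Set V) (T : Finset (Finset V)) : Prop :=
  ∀ P ∈ T, ↑P ⊆ c ∧ P.card = 2

/-- The main sum `p + ∑_{P ∈ T} ν(P)`. -/
noncomputable def npmSum (G : SimpleGraph V) (st : Set V) (T : Finset (Finset V)) : ℝ :=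
  (npm G st ∅ : ℝ) + ∑ P ∈ T, (npm G st (↑P) : ℝ)

/-- The inductive invariant. -/
def TNInv (G : SimpleGraph V) (st c : Set V) : Prop :=
  c ⊆ st ∧ c.ncard ≤ 4 ∧
  ∀ T : Finset (Finset V), PairsOf c T →
    ((∀ P ∈ T, ∀ Q ∈ T, P ≠ Q → ¬Disjoint P Q) →
        tf ((st.ncard : ℝ) + 2 * T.card) ≤ npmSum G st T) ∧
    (T.Nonempty → tf ((st.ncard : ℝ) + 2 * T.card - 2) ≤ npmSum G st T) ∧
    (∀ P ∈ T, ∀ Q ∈ T, Disjoint P Q →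
        tf ((st.ncard : ℝ) + 2 * T.card) ≤ npmSum G st T + (npm G st ↑(P ∪ Q) : ℝ))

lemma pairsOf_card_le {c : Set V} {T : Finset (Finset V)} (hc : c.ncard ≤ 4)
    (hT : PairsOf c T) : T.card ≤ 6 := by
  have hfin : c.Finite := Set.toFinite c
  have hsub : T ⊆ hfin.toFinset.powersetCard 2 := by
    intro P hP
    rw [Finset.mem_powersetCard]
    refine ⟨?_, (hT P hP).2⟩
    intro x hx
    rw [Set.Finite.mem_toFinset]
    exact (hT P hP).1 hx
  calc T.card ≤ (hfin.toFinset.powersetCard 2).card := Finset.card_le_card hsub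
  _ = (hfin.toFinset.card).choose 2 := by rw [Finset.card_powersetCard]
  _ ≤ (4 : ℕ).choose 2 := Nat.choose_le_choose 2 (by
      rw [← Set.ncard_eq_toFinset_card c hfin]; exact hc)
  _ = 6 := by decide

lemma one_le_npm {G : SimpleGraph V} {A X : Set V} {M : Set (Sym2 V)}
    (h : IsNearPM G A X M) : 1 ≤ npm G A X := by
  have : 0 < npm G A X := (Set.ncard_pos (Set.toFinite _)).mpr ⟨M, h⟩
  omega

lemma npm_nonneg_sum {G : SimpleGraph V} {st : Set V} (T : Finset (Finset V)) :
    0 ≤ ∑ P ∈ T, (npm G st (↑P) : ℝ) :=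
  Finset.sum_nonneg (fun P _ => by positivity)

lemma isNearPM_self_empty (G : SimpleGraph V) (A : Set V) : IsNearPM G A A ∅ := by
  refine ⟨by simp, ?_, by simp⟩
  intro w hw
  rw [Set.diff_self] at hw
  exact absurd hw (Set.notMem_empty w)

/-- A single edge as a near-perfect matching of a 4-cycle. -/
lemma isNearPM_one_edge {G : SimpleGraph V} {p q r t : V}
    (hpq : p ≠ q) (hpr : p ≠ r) (hpt : p ≠ t) (hqr : q ≠ r) (hqt : q ≠ t) (hrt : r ≠ t)
    (hadj : G.Adj r t) : IsNearPM G {p, q, r, t} {p, q} {s(r, t)} := by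
  refine ⟨?_, ?_, ?_⟩
  · rintro e rfl
    exact ⟨r, t, rfl, hadj, by simp, by simp⟩
  · rintro w ⟨hw, hwX⟩
    simp only [Set.mem_insert_iff, Set.mem_singleton_iff] at hw hwX
    push_neg at hwX
    rcases hw with rfl | rfl | rfl | rfl
    · exact absurd rfl hwX.1
    · exact absurd rfl hwX.2
    · refine ⟨s(w, t), ⟨rfl, by simp⟩, ?_⟩
      rintro e' ⟨rfl, -⟩
      rfl
    · refine ⟨s(r, w), ⟨rfl, by simp⟩, ?_⟩
      rintro e' ⟨rfl, -⟩
      rfl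
  · rintro w hw e rfl
    simp only [Set.mem_insert_iff, Set.mem_singleton_iff] at hw
    intro hwe
    rcases hw with rfl | rfl
    · rcases Sym2.mem_iff.mp hwe with rfl | rfl
      · exact hpr rfl
      · exact hpt rfl
    · rcases Sym2.mem_iff.mp hwe with rfl | rfl
      · exact hqr rfl
      · exact hqt rfl

/-- Two disjoint edges as a perfect matching of a 4-cycle. -/
lemma isNearPM_two_edges {G : SimpleGraph V} {p q r t : V}
    (hpq : p ≠ q) (hpr : p ≠ r) (hpt : p ≠ t) (hqr : q ≠ r) (hqt : q ≠ t) (hrt : r ≠ t)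
    (h1 : G.Adj p q) (h2 : G.Adj r t) :
    IsNearPM G {p, q, r, t} ∅ {s(p, q), s(r, t)} := by
  refine ⟨?_, ?_, by simp⟩
  · rintro e (rfl | rfl)
    · exact ⟨p, q, rfl, h1, by simp, by simp⟩
    · exact ⟨r, t, rfl, h2, by simp, by simp⟩
  · rintro w ⟨hw, -⟩
    simp only [Set.mem_insert_iff, Set.mem_singleton_iff] at hw
    rcases hw with rfl | rfl | rfl | rfl
    · refine ⟨s(w, q), ⟨Or.inl rfl, by simp⟩, ?_⟩
      rintro e' ⟨(rfl | he'), hwe'⟩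
      · rfl
      · rw [Set.mem_singleton_iff] at he'
        subst he'
        exfalso
        rcases Sym2.mem_iff.mp hwe' with rfl | rfl
        · exact hpr rfl
        · exact hpt rfl
    · refine ⟨s(p, w), ⟨Or.inl rfl, by simp⟩, ?_⟩
      rintro e' ⟨(rfl | he'), hwe'⟩
      · rfl
      · rw [Set.mem_singleton_iff] at he'
        subst he'
        exfalso
        rcases Sym2.mem_iff.mp hwe' with rfl | rfl
        · exact hqr rfl
        · exact hqt rfl
    · refine ⟨s(w, t), ⟨Or.inr rfl, by simp⟩, ?_⟩
      rintro e' ⟨(rfl | he'), hwe'⟩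
      · exfalso
        rcases Sym2.mem_iff.mp hwe' with rfl | rfl
        · exact hpr rfl
        · exact hqr rfl
      · rw [Set.mem_singleton_iff] at he'
        subst he'
        rfl
    · refine ⟨s(r, w), ⟨Or.inr rfl, by simp⟩, ?_⟩
      rintro e' ⟨(rfl | he'), hwe'⟩
      · exfalso
        rcases Sym2.mem_iff.mp hwe' with rfl | rfl
        · exact hpt rfl
        · exact hqt rfl
      · rw [Set.mem_singleton_iff] at he'
        subst he'
        rfl

end Invariant

section BaseCase

variable [Fintype V]

lemma npmSum_def (G : SimpleGraph V) (st : Set V) (T : Finset (Finset V)) :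
    npmSum G st T = (npm G st ∅ : ℝ) + ∑ P ∈ T, (npm G st (↑P) : ℝ) := rfl

lemma base_num1 {k : ℕ} (h1 : 1 ≤ k) (h6 : k ≤ 6) : tf (4 + 2 * (k : ℝ)) ≤ (k : ℝ) + 1 := by
  interval_cases k
  · calc tf (4 + 2 * ((1 : ℕ) : ℝ)) ≤ 2 := tf_le_two (by norm_num)
    _ ≤ _ := by norm_num
  · calc tf (4 + 2 * ((2 : ℕ) : ℝ)) = tf 8 := by norm_num
    _ ≤ 3 := tf_eight_le
    _ ≤ _ := by norm_num
  · calc tf (4 + 2 * ((3 : ℕ) : ℝ)) ≤ 4 := tf_le_four (by norm_num)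
    _ ≤ _ := by norm_num
  · calc tf (4 + 2 * ((4 : ℕ) : ℝ)) ≤ 4 := tf_le_four (by norm_num)
    _ ≤ _ := by norm_num
  · calc tf (4 + 2 * ((5 : ℕ) : ℝ)) ≤ 4 := tf_le_four (by norm_num)
    _ ≤ _ := by norm_num
  · calc tf (4 + 2 * ((6 : ℕ) : ℝ)) ≤ 4 := tf_le_four (by norm_num)
    _ ≤ _ := by norm_num

lemma tnInv_cyc4 {G : SimpleGraph V} {a b c d : V} (hab : a ≠ b) (hac : a ≠ c) (had : a ≠ d)
    (hbc : b ≠ c) (hbd : b ≠ d) (hcd : c ≠ d)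
    (hadj : ∀ x ∈ ({a, b, c, d} : Set V), ∀ y ∈ ({a, b, c, d} : Set V),
      (G.Adj x y ↔ s(x, y) ∈ ({s(a, b), s(b, c), s(c, d), s(d, a)} : Set (Sym2 V)))) :
    TNInv G {a, b, c, d} {a, b, c, d} := by
  set S : Set V := {a, b, c, d} with hS
  have hmema : a ∈ S := by rw [hS]; simp
  have hmemb : b ∈ S := by rw [hS]; simp
  have hmemc : c ∈ S := by rw [hS]; simp
  have hmemd : d ∈ S := by rw [hS]; simp
  have hAab : G.Adj a b := (hadj a hmema b hmemb).mpr (Or.inl rfl)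
  have hAbc : G.Adj b c := (hadj b hmemb c hmemc).mpr (Or.inr (Or.inl rfl))
  have hAcd : G.Adj c d := (hadj c hmemc d hmemd).mpr (Or.inr (Or.inr (Or.inl rfl)))
  have hAda : G.Adj d a := (hadj d hmemd a hmema).mpr (Or.inr (Or.inr (Or.inr rfl)))
  have hncard : S.ncard = 4 := by
    rw [hS, Set.ncard_insert_of_notMem (by simp [hab, hac, had]),
      Set.ncard_insert_of_notMem (by simp [hbc, hbd]), Set.ncard_pair hcd]
  have hset2 : ({b, c, d, a} : Set V) = S := by rw [hS]; ext z; simp; tauto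
  have hset3 : ({c, d, a, b} : Set V) = S := by rw [hS]; ext z; simp; tauto
  have hset4 : ({d, a, b, c} : Set V) = S := by rw [hS]; ext z; simp; tauto
  have hM1 : IsNearPM G S ∅ {s(a, b), s(c, d)} := by
    rw [hS]
    exact isNearPM_two_edges hab hac had hbc hbd hcd hAab hAcd
  have hM2 : IsNearPM G S ∅ {s(b, c), s(d, a)} := by
    have := isNearPM_two_edges hbc hbd hab.symm hcd hac.symm had.symm hAbc hAda
    rwa [hset2] at this
  have hp2 : 2 ≤ npm G S ∅ := by
    have hne : ({s(a, b), s(c, d)} : Set (Sym2 V)) ≠ {s(b, c), s(d, a)} := by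
      intro h
      have hmem : s(a, b) ∈ ({s(b, c), s(d, a)} : Set (Sym2 V)) := h ▸ Set.mem_insert _ _
      rcases hmem with h' | h'
      · rw [Sym2.eq_iff] at h'
        rcases h' with ⟨h1, -⟩ | ⟨h1, -⟩
        · exact hab h1
        · exact hac h1
      · rw [Set.mem_singleton_iff, Sym2.eq_iff] at h'
        rcases h' with ⟨h1, -⟩ | ⟨-, h1⟩
        · exact had h1
        · exact hbd h1
    have hsub : ({({s(a, b), s(c, d)} : Set (Sym2 V)), {s(b, c), s(d, a)}} : Set (Set (Sym2 V)))
        ⊆ {M | IsNearPM G S ∅ M} := by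
      rintro M (rfl | rfl)
      · exact hM1
      · exact hM2
    calc 2 = ({({s(a, b), s(c, d)} : Set (Sym2 V)), {s(b, c), s(d, a)}} :
          Set (Set (Sym2 V))).ncard := (Set.ncard_pair hne).symm
    _ ≤ npm G S ∅ := Set.ncard_le_ncard hsub (Set.toFinite _)
  have hp2' : (2 : ℝ) ≤ (npm G S ∅ : ℝ) := by exact_mod_cast hp2
  have w1 : IsNearPM G S {a, b} {s(c, d)} := by
    rw [hS]
    exact isNearPM_one_edge hab hac had hbc hbd hcd hAcd
  have w2 : IsNearPM G S {b, c} {s(d, a)} := by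
    have := isNearPM_one_edge hbc hbd hab.symm hcd hac.symm had.symm hAda
    rwa [hset2] at this
  have w3 : IsNearPM G S {c, d} {s(a, b)} := by
    have := isNearPM_one_edge hcd hac.symm hbc.symm had.symm hbd.symm hab hAab
    rwa [hset3] at this
  have w4 : IsNearPM G S {d, a} {s(b, c)} := by
    have := isNearPM_one_edge had.symm hbd.symm hcd.symm hab hac hbc hAbc
    rwa [hset4] at this
  have perPair : ∀ P : Finset V, ↑P ⊆ S → P.card = 2 → P ≠ ({a, c} : Finset V) →
      P ≠ ({b, d} : Finset V) → (1 : ℝ) ≤ (npm G S ↑P : ℝ) := by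
    intro P hPsub hP2 hD1 hD2
    obtain ⟨x, y, hxy, rfl⟩ := Finset.card_eq_two.mp hP2
    have hx : x ∈ S := hPsub (by simp)
    have hy : y ∈ S := hPsub (by simp)
    have hcoe : (↑({x, y} : Finset V) : Set V) = ({x, y} : Set V) := by simp
    rw [hcoe]
    rw [hS] at hx hy
    simp only [Set.mem_insert_iff, Set.mem_singleton_iff] at hx hy
    have key : ∀ (X : Set V) (M : Set (Sym2 V)), IsNearPM G S X M → X = {x, y} →
        (1 : ℝ) ≤ (npm G S ({x, y} : Set V) : ℝ) := by
      intro X M hM hXeq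
      rw [← hXeq]
      exact_mod_cast one_le_npm hM
    rcases hx with rfl | rfl | rfl | rfl <;> rcases hy with rfl | rfl | rfl | rfl
    · exact absurd rfl hxy
    · exact key _ _ w1 rfl
    · exact absurd rfl hD1
    · exact key _ _ w4 (Set.pair_comm _ _)
    · exact key _ _ w1 (Set.pair_comm _ _)
    · exact absurd rfl hxy
    · exact key _ _ w2 rfl
    · exact absurd rfl hD2
    · exact absurd (Finset.pair_comm x y) hD1
    · exact key _ _ w2 (Set.pair_comm _ _)
    · exact absurd rfl hxy
    · exact key _ _ w3 rfl
    · exact key _ _ w4 rfl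
    · exact absurd (Finset.pair_comm x y) hD2
    · exact key _ _ w3 (Set.pair_comm _ _)
    · exact absurd rfl hxy
  have sumBound : ∀ (T Sx : Finset (Finset V)),
      (∀ P ∈ T, P ∉ Sx → (1 : ℝ) ≤ (npm G S ↑P : ℝ)) →
      (T.card : ℝ) - Sx.card ≤ ∑ P ∈ T, (npm G S ↑P : ℝ) := by
    intro T Sx hgood
    have h1 : ((T \ Sx).card : ℝ) ≤ ∑ P ∈ T \ Sx, (npm G S ↑P : ℝ) := by
      rw [show ((T \ Sx).card : ℝ) = ∑ _P ∈ T \ Sx, (1 : ℝ) by simp]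
      exact Finset.sum_le_sum (fun P hP =>
        hgood P (Finset.mem_sdiff.mp hP).1 (Finset.mem_sdiff.mp hP).2)
    have h2 : ∑ P ∈ T \ Sx, (npm G S ↑P : ℝ) ≤ ∑ P ∈ T, (npm G S ↑P : ℝ) :=
      Finset.sum_le_sum_of_subset_of_nonneg (Finset.sdiff_subset) (fun P _ _ => by positivity)
    have h4 : T.card ≤ (T \ Sx).card + Sx.card := by
      calc T.card ≤ (T ∪ Sx).card := Finset.card_le_card Finset.subset_union_left
      _ = (T \ Sx).card + Sx.card := (Finset.card_sdiff_add_card T Sx).symm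
    have h4' : (T.card : ℝ) ≤ ((T \ Sx).card : ℝ) + Sx.card := by exact_mod_cast h4
    linarith
  have hD12 : Disjoint ({a, c} : Finset V) ({b, d} : Finset V) := by
    rw [Finset.disjoint_left]
    intro x hx hx'
    simp only [Finset.mem_insert, Finset.mem_singleton] at hx hx'
    rcases hx with rfl | rfl
    · rcases hx' with h' | h'
      · exact hab h'
      · exact had h'
    · rcases hx' with h' | h'
      · exact hbc h'.symm
      · exact hcd h'
  have hD1D2ne : ({a, c} : Finset V) ≠ ({b, d} : Finset V) := by
    intro h
    have : a ∈ ({b, d} : Finset V) := h ▸ Finset.mem_insert_self a {c}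
    simp only [Finset.mem_insert, Finset.mem_singleton] at this
    rcases this with h' | h'
    · exact hab h'
    · exact had h'
  refine ⟨Set.Subset.rfl, le_of_eq hncard, ?_⟩
  intro T hT
  have hTcard : T.card ≤ 6 := pairsOf_card_le (le_of_eq hncard) hT
  have hTcard' : (T.card : ℝ) ≤ 6 := by exact_mod_cast hTcard
  have hsumnn : 0 ≤ ∑ P ∈ T, (npm G S ↑P : ℝ) := npm_nonneg_sum T
  refine ⟨?_, ?_, ?_⟩
  · -- SA
    intro hint
    rcases Finset.eq_empty_or_nonempty T with rfl | hTne
    · rw [npmSum_def]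
      simp only [Finset.card_empty, Finset.sum_empty, add_zero]
      calc tf ((S.ncard : ℝ) + 2 * ((0 : ℕ) : ℝ)) ≤ tf 6 := by
            rw [hncard]; exact tf_mono (by norm_num)
      _ = 2 := tf_six
      _ ≤ _ := hp2'
    · have hk1 : 1 ≤ T.card := Finset.card_pos.mpr hTne
      have hk1' : (1 : ℝ) ≤ (T.card : ℝ) := by exact_mod_cast hk1
      have hmain : (T.card : ℝ) - 1 ≤ ∑ P ∈ T, (npm G S ↑P : ℝ) := by
        by_cases hD1T : ({a, c} : Finset V) ∈ T
        · by_cases hD2T : ({b, d} : Finset V) ∈ T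
          · exact absurd hD12 (hint _ hD1T _ hD2T hD1D2ne)
          · have := sumBound T {({a, c} : Finset V)} (fun P hP hPn => by
              refine perPair P (hT P hP).1 (hT P hP).2 (by simpa using hPn)
                (fun h => hD2T (h ▸ hP)))
            simpa using this
        · have := sumBound T {({b, d} : Finset V)} (fun P hP hPn => by
            refine perPair P (hT P hP).1 (hT P hP).2 (fun h => hD1T (h ▸ hP))
              (by simpa using hPn))
          simpa using this
      rw [npmSum_def, hncard]
      calc tf (((4 : ℕ) : ℝ) + 2 * T.card) = tf (4 + 2 * (T.card : ℝ)) := by norm_num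
      _ ≤ (T.card : ℝ) + 1 := base_num1 hk1 hTcard
      _ ≤ (npm G S ∅ : ℝ) + ∑ P ∈ T, (npm G S ↑P : ℝ) := by linarith
  · -- SB
    intro hTne
    have hk1 : 1 ≤ T.card := Finset.card_pos.mpr hTne
    have hk1' : (1 : ℝ) ≤ (T.card : ℝ) := by exact_mod_cast hk1
    have hmain : (T.card : ℝ) - 2 ≤ ∑ P ∈ T, (npm G S ↑P : ℝ) := by
      have hSx : ({({a, c} : Finset V), ({b, d} : Finset V)} : Finset (Finset V)).card ≤ 2 :=
        Finset.card_insert_le _ _ |>.trans (by simp)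
      have := sumBound T {({a, c} : Finset V), ({b, d} : Finset V)} (fun P hP hPn => by
        simp only [Finset.mem_insert, Finset.mem_singleton] at hPn
        push_neg at hPn
        exact perPair P (hT P hP).1 (hT P hP).2 hPn.1 hPn.2)
      have hSx' : (({({a, c} : Finset V), ({b, d} : Finset V)} : Finset (Finset V)).card : ℝ) ≤ 2 := by
        exact_mod_cast hSx
      linarith
    rw [npmSum_def, hncard]
    by_cases hk2 : T.card ≤ 2
    · have hk2' : (T.card : ℝ) ≤ 2 := by exact_mod_cast hk2
      calc tf (((4 : ℕ) : ℝ) + 2 * T.card - 2) ≤ tf 6 := tf_mono (by push_cast; linarith)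
      _ = 2 := tf_six
      _ ≤ _ := by linarith
    · push_neg at hk2
      by_cases hk3 : T.card = 3
      · rw [hk3]
        calc tf (((4 : ℕ) : ℝ) + 2 * ((3 : ℕ) : ℝ) - 2) = tf 8 := by norm_num
        _ ≤ 3 := tf_eight_le
        _ ≤ _ := by
            rw [hk3] at hmain
            push_cast at hmain ⊢
            linarith
      · have hk4 : 4 ≤ T.card := by omega
        have hk4' : (4 : ℝ) ≤ (T.card : ℝ) := by exact_mod_cast hk4
        calc tf (((4 : ℕ) : ℝ) + 2 * T.card - 2) ≤ 4 := tf_le_four (by push_cast; linarith)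
        _ ≤ _ := by linarith
  · -- S1
    intro P hP Q hQ hPQ
    have hPQne : P ≠ Q := by
      intro h
      subst h
      rw [disjoint_self] at hPQ
      have h2 := (hT P hP).2
      rw [hPQ] at h2
      simp at h2
    have hk2 : 2 ≤ T.card := by
      calc 2 = ({P, Q} : Finset (Finset V)).card := (Finset.card_pair hPQne).symm
      _ ≤ T.card := Finset.card_le_card (by
          intro R hR
          simp only [Finset.mem_insert, Finset.mem_singleton] at hR
          rcases hR with rfl | rfl
          · exact hP
          · exact hQ)
    have hunion : (↑(P ∪ Q) : Set V) = S := by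
      have hsub : (↑(P ∪ Q) : Set V) ⊆ S := by
        rw [Finset.coe_union]
        exact Set.union_subset (hT P hP).1 (hT Q hQ).1
      have hc4 : (↑(P ∪ Q) : Set V).ncard = 4 := by
        rw [Set.ncard_coe_finset, Finset.card_union_of_disjoint hPQ, (hT P hP).2, (hT Q hQ).2]
      exact Set.eq_of_subset_of_ncard_le hsub (by rw [hc4, hncard]) (Set.toFinite _)
    have hq1 : (1 : ℝ) ≤ (npm G S ↑(P ∪ Q) : ℝ) := by
      rw [hunion]
      exact_mod_cast one_le_npm (isNearPM_self_empty G S)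
    have hmain : (T.card : ℝ) - 2 ≤ ∑ P ∈ T, (npm G S ↑P : ℝ) := by
      have hSx : (({({a, c} : Finset V), ({b, d} : Finset V)} : Finset (Finset V)).card : ℝ) ≤ 2 := by
        exact_mod_cast (Finset.card_insert_le _ _ |>.trans (by simp) :
          ({({a, c} : Finset V), ({b, d} : Finset V)} : Finset (Finset V)).card ≤ 2)
      have := sumBound T {({a, c} : Finset V), ({b, d} : Finset V)} (fun R hR hRn => by
        simp only [Finset.mem_insert, Finset.mem_singleton] at hRn
        push_neg at hRn
        exact perPair R (hT R hR).1 (hT R hR).2 hRn.1 hRn.2)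
      linarith
    rw [npmSum_def, hncard]
    have hk2' : (1 : ℕ) ≤ T.card := by omega
    calc tf (((4 : ℕ) : ℝ) + 2 * T.card) = tf (4 + 2 * (T.card : ℝ)) := by norm_num
    _ ≤ (T.card : ℝ) + 1 := base_num1 hk2' hTcard
    _ ≤ _ := by linarith

end BaseCase

section IncrStep

variable [Fintype V]

lemma tnInv_incr {G : SimpleGraph V} {st c : Set V} {u u' v v' : V}
    (hu : u ∈ c) (hu' : u' ∈ c) (huu' : u ≠ u')
    (hv : v ∉ st) (hv' : v' ∉ st) (hvv' : v ≠ v')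
    (hvv'adj : G.Adj v v') (huv : G.Adj u v) (hu'v' : G.Adj u' v')
    (IH : TNInv G st c) :
    TNInv G (st ∪ {v, v'}) ((c \ {u, u'}) ∪ {v, v'}) := by
  obtain ⟨hcsub, hc4, hIH⟩ := IH
  have hust : u ∈ st := hcsub hu
  have hu'st : u' ∈ st := hcsub hu'
  have huuc : ({u, u'} : Set V) ⊆ c := by
    rintro z (rfl | rfl)
    · exact hu
    · exact hu'
  have hold : ∀ z, z ∈ c \ ({u, u'} : Set V) →
      z ∈ st ∧ z ≠ u ∧ z ≠ u' ∧ z ≠ v ∧ z ≠ v' := by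
    rintro z ⟨hzc, hz2⟩
    simp only [Set.mem_insert_iff, Set.mem_singleton_iff] at hz2
    push_neg at hz2
    have hzst : z ∈ st := hcsub hzc
    exact ⟨hzst, hz2.1, hz2.2, fun h => hv (h ▸ hzst), fun h => hv' (h ▸ hzst)⟩
  -- cardinalities
  have hdisjvv : Disjoint st ({v, v'} : Set V) := by
    rw [Set.disjoint_right]
    rintro z (rfl | rfl)
    · exact hv
    · exact hv'
  have hn2 : (st ∪ {v, v'} : Set V).ncard = st.ncard + 2 := by
    rw [Set.ncard_union_eq hdisjvv (Set.toFinite _) (Set.toFinite _), Set.ncard_pair hvv']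
  have hn2' : (((st ∪ {v, v'} : Set V).ncard : ℝ)) = (st.ncard : ℝ) + 2 := by
    rw [hn2]; push_cast; ring
  have hcd2 : (c \ ({u, u'} : Set V)).ncard ≤ 2 := by
    rw [Set.ncard_diff huuc (Set.toFinite _), Set.ncard_pair huu']
    omega
  have hc'sub : (c \ {u, u'}) ∪ ({v, v'} : Set V) ⊆ st ∪ {v, v'} := by
    apply Set.union_subset
    · exact ((Set.diff_subset).trans hcsub).trans Set.subset_union_left
    · exact Set.subset_union_right
  have hc'4 : ((c \ {u, u'}) ∪ ({v, v'} : Set V)).ncard ≤ 4 := by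
    calc ((c \ {u, u'}) ∪ ({v, v'} : Set V)).ncard
        ≤ (c \ ({u, u'} : Set V)).ncard + ({v, v'} : Set V).ncard := Set.ncard_union_le _ _
    _ ≤ 2 + 2 := by
        have : ({v, v'} : Set V).ncard = 2 := Set.ncard_pair hvv'
        omega
    _ = 4 := by norm_num
  -- counting facts
  have Cp : npm G st ∅ + npm G st {u, u'} ≤ npm G (st ∪ {v, v'}) ∅ := by
    have := npm_add_le (G := G) hv hv' hvv' hust hu'st huu' hvv'adj huv hu'v'
      (Set.empty_subset st) (Set.notMem_empty u) (Set.notMem_empty u')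
    rwa [Set.empty_union] at this
  have CR : ∀ R : Set V, R ⊆ st → u ∉ R → u' ∉ R →
      npm G st R + npm G st (R ∪ {u, u'}) ≤ npm G (st ∪ {v, v'}) R := by
    intro R h1 h2 h3
    exact npm_add_le hv hv' hvv' hust hu'st huu' hvv'adj huv hu'v' h1 h2 h3
  have Cvv : npm G st ∅ ≤ npm G (st ∪ {v, v'}) ({v, v'} : Set V) := by
    have := npm_le_extend (G := G) (st := st) (X := ∅) (Y := {v, v'}) (by
      rintro z (rfl | rfl)
      · exact hv
      · exact hv')
    rwa [Set.empty_union] at this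
  have Cext : ∀ X : Set V, npm G st X ≤ npm G (st ∪ {v, v'}) (X ∪ {v, v'}) := by
    intro X
    exact npm_le_extend (by
      rintro z (rfl | rfl)
      · exact hv
      · exact hv')
  have Cshift : ∀ x, x ∈ st → x ≠ u' → npm G st {x, u'} ≤ npm G (st ∪ {v, v'}) {x, v} :=
    fun x hx hxu' => npm_shift_le hv hv' hvv' hx hu'st hxu' hu'v'
  have Cshift' : ∀ x, x ∈ st → x ≠ u → npm G st {x, u} ≤ npm G (st ∪ {v, v'}) {x, v'} := by
    intro x hx hxu
    have := npm_shift_le (G := G) (v := v') (v' := v) (u' := u) hv' hv hvv'.symm hx hust hxu huv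
    rwa [Set.pair_comm v' v] at this
  -- base bound from IH
  have hpbase : tf ((st.ncard : ℝ)) ≤ (npm G st ∅ : ℝ) := by
    have h0 := (hIH ∅ (by intro P hP; simp at hP)).1 (by simp)
    rw [npmSum_def] at h0
    simpa using h0
  -- start
  refine ⟨hc'sub, hc'4, ?_⟩
  intro T' hT'
  have hT'card : T'.card ≤ 6 := pairsOf_card_le hc'4 hT'
  have hT'card' : (T'.card : ℝ) ≤ 6 := by exact_mod_cast hT'card
  have hsum'nn : 0 ≤ ∑ P ∈ T', (npm G (st ∪ {v, v'}) (↑P) : ℝ) := npm_nonneg_sum T'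
  by_cases hvvT : ({v, v'} : Finset V) ∈ T'
  · -- discharge case
    have hco : (↑({v, v'} : Finset V) : Set V) = ({v, v'} : Set V) := by simp
    have hp' : (npm G st ∅ : ℝ) ≤ (npm G (st ∪ {v, v'}) ∅ : ℝ) := by
      have : npm G st ∅ ≤ npm G (st ∪ {v, v'}) ∅ := le_trans (Nat.le_add_right _ _) Cp
      exact_mod_cast this
    have hterm : (npm G st ∅ : ℝ) ≤ (npm G (st ∪ {v, v'}) ↑({v, v'} : Finset V) : ℝ) := by
      rw [hco]
      exact_mod_cast Cvv
    have hsingle : (npm G (st ∪ {v, v'}) ↑({v, v'} : Finset V) : ℝ) ≤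
        ∑ P ∈ T', (npm G (st ∪ {v, v'}) (↑P) : ℝ) :=
      Finset.single_le_sum (f := fun P : Finset V => (npm G (st ∪ {v, v'}) (↑P : Set V) : ℝ))
        (fun P _ => by positivity) hvvT
    have hdis : tf ((st.ncard : ℝ) + 18) ≤ npmSum G (st ∪ {v, v'}) T' := by
      rw [← tf_add_tf, npmSum_def]
      have h1 : tf (st.ncard : ℝ) ≤ (npm G (st ∪ {v, v'}) ∅ : ℝ) := le_trans hpbase hp'
      have h2 : tf (st.ncard : ℝ) ≤ ∑ P ∈ T', (npm G (st ∪ {v, v'}) (↑P) : ℝ) :=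
        le_trans (le_trans hpbase hterm) hsingle
      linarith
    have harg : ∀ r : ℝ, r ≤ (st.ncard : ℝ) + 18 → tf r ≤ npmSum G (st ∪ {v, v'}) T' :=
      fun r hr => le_trans (tf_mono hr) hdis
    refine ⟨?_, ?_, ?_⟩
    · intro _
      exact harg _ (by rw [hn2']; linarith)
    · intro _
      exact harg _ (by rw [hn2']; linarith)
    · intro P _ Q _ _
      refine le_trans (harg _ (by rw [hn2']; linarith)) ?_
      have : (0 : ℝ) ≤ (npm G (st ∪ {v, v'}) ↑(P ∪ Q) : ℝ) := by positivity
      linarith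
  · -- transfer case
    classical
    set m : Finset V → Finset V := fun P =>
      if v ∈ P then insert u' (P.erase v) else if v' ∈ P then insert u (P.erase v') else P
      with hm
    have hmv : ∀ x : V, x ≠ v → m ({x, v} : Finset V) = {u', x} := by
      intro x hxv
      rw [hm]
      simp only
      rw [if_pos (by simp)]
      congr 1
      ext z
      simp only [Finset.mem_erase, Finset.mem_insert, Finset.mem_singleton]
      constructor
      · rintro ⟨h1, (rfl | rfl)⟩
        · rfl
        · exact absurd rfl h1
      · rintro rfl
        exact ⟨hxv, Or.inl rfl⟩
    have hmv' : ∀ x : V, x ≠ v → x ≠ v' → m ({x, v'} : Finset V) = {u, x} := by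
      intro x hxv hxv'
      rw [hm]
      simp only
      rw [if_neg (by
        simp only [Finset.mem_insert, Finset.mem_singleton]
        push_neg
        exact ⟨fun h => hxv h.symm, fun h => hvv' h⟩)]
      rw [if_pos (by simp)]
      congr 1
      ext z
      simp only [Finset.mem_erase, Finset.mem_insert, Finset.mem_singleton]
      constructor
      · rintro ⟨h1, (rfl | rfl)⟩
        · rfl
        · exact absurd rfl h1
      · rintro rfl
        exact ⟨hxv', Or.inl rfl⟩
    have hmold : ∀ P : Finset V, v ∉ P → v' ∉ P → m P = P := by
      intro P h1 h2
      rw [hm]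
      simp only
      rw [if_neg h1, if_neg h2]
    -- structure of pairs of the new corner set
    have pairStruct : ∀ P ∈ T',
        (∃ x, x ∈ c \ ({u, u'} : Set V) ∧ P = ({x, v} : Finset V) ∧ m P = {u', x}) ∨
        (∃ x, x ∈ c \ ({u, u'} : Set V) ∧ P = ({x, v'} : Finset V) ∧ m P = {u, x}) ∨
        ((↑P : Set V) ⊆ c \ {u, u'} ∧ m P = P ∧ v ∉ P ∧ v' ∉ P) := by
      intro P hP
      obtain ⟨hPsub, hP2⟩ := hT' P hP
      obtain ⟨x, y, hxy, rfl⟩ := Finset.card_eq_two.mp hP2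
      have hx : x ∈ (c \ {u, u'}) ∪ ({v, v'} : Set V) := hPsub (by simp)
      have hy : y ∈ (c \ {u, u'}) ∪ ({v, v'} : Set V) := hPsub (by simp)
      rcases hx with hx | hx
      · rcases hy with hy | hy
        · -- both old
          refine Or.inr (Or.inr ⟨?_, ?_, ?_, ?_⟩)
          · intro z hz
            simp only [Finset.coe_insert, Finset.coe_singleton, Set.mem_insert_iff,
              Set.mem_singleton_iff] at hz
            rcases hz with rfl | rfl
            · exact hx
            · exact hy
          · exact hmold _ (by
              simp only [Finset.mem_insert, Finset.mem_singleton]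
              push_neg
              exact ⟨fun h => (hold x hx).2.2.2.1 h.symm, fun h => (hold y hy).2.2.2.1 h.symm⟩)
              (by
              simp only [Finset.mem_insert, Finset.mem_singleton]
              push_neg
              exact ⟨fun h => (hold x hx).2.2.2.2 h.symm, fun h => (hold y hy).2.2.2.2 h.symm⟩)
          · simp only [Finset.mem_insert, Finset.mem_singleton]
            push_neg
            exact ⟨fun h => (hold x hx).2.2.2.1 h.symm, fun h => (hold y hy).2.2.2.1 h.symm⟩
          · simp only [Finset.mem_insert, Finset.mem_singleton]
            push_neg
            exact ⟨fun h => (hold x hx).2.2.2.2 h.symm, fun h => (hold y hy).2.2.2.2 h.symm⟩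
        · -- x old, y ∈ {v, v'}
          rcases hy with rfl | rfl
          · exact Or.inl ⟨x, hx, rfl, hmv x (hold x hx).2.2.2.1⟩
          · exact Or.inr (Or.inl ⟨x, hx, rfl, hmv' x (hold x hx).2.2.2.1 (hold x hx).2.2.2.2⟩)
      · rcases hy with hy | hy
        · -- x ∈ {v,v'}, y old
          rcases hx with rfl | rfl
          · refine Or.inl ⟨y, hy, Finset.pair_comm _ _, ?_⟩
            rw [Finset.pair_comm x y]
            exact hmv y (hold y hy).2.2.2.1
          · refine Or.inr (Or.inl ⟨y, hy, Finset.pair_comm _ _, ?_⟩)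
            rw [Finset.pair_comm x y]
            exact hmv' y (hold y hy).2.2.2.1 (hold y hy).2.2.2.2
        · -- both new: P = {v, v'}: contradiction
          exfalso
          rcases hx with rfl | rfl <;> rcases hy with rfl | rfl
          · exact hxy rfl
          · exact hvvT hP
          · exact hvvT (by rwa [Finset.pair_comm x y] at hP)
          · exact hxy rfl
    -- basic consequences of the structure
    have hPairsStar : ∀ P ∈ T', (↑(m P) : Set V) ⊆ c ∧ (m P).card = 2 := by
      intro P hP
      rcases pairStruct P hP with ⟨x, hx, -, hmP⟩ | ⟨x, hx, -, hmP⟩ | ⟨hPsub, hmP, -, -⟩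
      · rw [hmP]
        constructor
        · intro z hz
          simp only [Finset.coe_insert, Finset.coe_singleton, Set.mem_insert_iff,
            Set.mem_singleton_iff] at hz
          rcases hz with rfl | rfl
          · exact hu'
          · exact hx.1
        · exact Finset.card_pair (fun h => (hold x hx).2.2.1 h.symm)
      · rw [hmP]
        constructor
        · intro z hz
          simp only [Finset.coe_insert, Finset.coe_singleton, Set.mem_insert_iff,
            Set.mem_singleton_iff] at hz
          rcases hz with rfl | rfl
          · exact hu
          · exact hx.1
        · exact Finset.card_pair (fun h => (hold x hx).2.1 h.symm)
      · rw [hmP]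
        exact ⟨hPsub.trans Set.diff_subset, (hT' P hP).2⟩
    have hmemold : ∀ (R : Finset V), (↑R : Set V) ⊆ c \ {u, u'} → u ∉ R ∧ u' ∉ R := by
      intro R hR
      constructor
      · intro hcon
        exact (hold u (hR hcon)).2.1 rfl
      · intro hcon
        exact (hold u' (hR hcon)).2.2.1 rfl
    -- injectivity of m on T'
    have F2 : ∀ P ∈ T', ∀ Q ∈ T', m P = m Q → P = Q := by
      intro P hP Q hQ heq
      rcases pairStruct P hP with ⟨x, hx, hPe, hmP⟩ | ⟨x, hx, hPe, hmP⟩ | ⟨hPsub, hmP, -, -⟩ <;>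
        rcases pairStruct Q hQ with ⟨y, hy, hQe, hmQ⟩ | ⟨y, hy, hQe, hmQ⟩ | ⟨hQsub, hmQ, -, -⟩
      · -- both type 1
        rw [hmP, hmQ] at heq
        have hxy : x = y := by
          have : x ∈ ({u', y} : Finset V) := heq ▸ (by simp : x ∈ ({u', x} : Finset V))
          simp only [Finset.mem_insert, Finset.mem_singleton] at this
          rcases this with h | h
          · exact absurd h (fun h => (hold x hx).2.2.1 h)
          · exact h
        rw [hPe, hQe, hxy]
      · -- 1 vs 2
        exfalso
        rw [hmP, hmQ] at heq
        have : u ∈ ({u', x} : Finset V) := heq ▸ (by simp : u ∈ ({u, y} : Finset V))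
        simp only [Finset.mem_insert, Finset.mem_singleton] at this
        rcases this with h | h
        · exact huu' h
        · exact (hold x hx).2.1 h.symm
      · -- 1 vs 3
        exfalso
        rw [hmP, hmQ] at heq
        have : u' ∈ Q := heq ▸ (by simp : u' ∈ ({u', x} : Finset V))
        exact (hmemold Q hQsub).2 this
      · -- 2 vs 1
        exfalso
        rw [hmP, hmQ] at heq
        have : u ∈ ({u', y} : Finset V) := heq ▸ (by simp : u ∈ ({u, x} : Finset V))
        simp only [Finset.mem_insert, Finset.mem_singleton] at this
        rcases this with h | h
        · exact huu' h
        · exact (hold y hy).2.1 h.symm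
      · -- both type 2
        rw [hmP, hmQ] at heq
        have hxy : x = y := by
          have : x ∈ ({u, y} : Finset V) := heq ▸ (by simp : x ∈ ({u, x} : Finset V))
          simp only [Finset.mem_insert, Finset.mem_singleton] at this
          rcases this with h | h
          · exact absurd h (fun h => (hold x hx).2.1 h)
          · exact h
        rw [hPe, hQe, hxy]
      · -- 2 vs 3
        exfalso
        rw [hmP, hmQ] at heq
        have : u ∈ Q := heq ▸ (by simp : u ∈ ({u, x} : Finset V))
        exact (hmemold Q hQsub).1 this
      · -- 3 vs 1
        exfalso
        rw [hmP, hmQ] at heq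
        have : u' ∈ P := heq.symm ▸ (by simp : u' ∈ ({u', y} : Finset V))
        exact (hmemold P hPsub).2 this
      · -- 3 vs 2
        exfalso
        rw [hmP, hmQ] at heq
        have : u ∈ P := heq.symm ▸ (by simp : u ∈ ({u, y} : Finset V))
        exact (hmemold P hPsub).1 this
      · -- both type 3
        rw [hmP, hmQ] at heq
        exact heq
    have F2' : Set.InjOn m ↑T' := fun P hP Q hQ => F2 P hP Q hQ
    have F3 : ({u, u'} : Finset V) ∉ T'.image m := by
      intro hcon
      obtain ⟨P, hP, hPeq⟩ := Finset.mem_image.mp hcon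
      rcases pairStruct P hP with ⟨x, hx, -, hmP⟩ | ⟨x, hx, -, hmP⟩ | ⟨hPsub, hmP, -, -⟩
      · rw [hmP] at hPeq
        have : u ∈ ({u', x} : Finset V) := hPeq.symm ▸ (by simp : u ∈ ({u, u'} : Finset V))
        simp only [Finset.mem_insert, Finset.mem_singleton] at this
        rcases this with h | h
        · exact huu' h
        · exact (hold x hx).2.1 h.symm
      · rw [hmP] at hPeq
        have : u' ∈ ({u, x} : Finset V) := hPeq.symm ▸ (by simp : u' ∈ ({u, u'} : Finset V))
        simp only [Finset.mem_insert, Finset.mem_singleton] at this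
        rcases this with h | h
        · exact huu' h.symm
        · exact (hold x hx).2.2.1 h.symm
      · rw [hmP] at hPeq
        have : u ∈ P := hPeq.symm ▸ (by simp : u ∈ ({u, u'} : Finset V))
        exact (hmemold P hPsub).1 this
    -- pointwise bound F4
    have F4 : ∀ P ∈ T', (npm G st ↑(m P) : ℝ) ≤ (npm G (st ∪ {v, v'}) ↑P : ℝ) := by
      intro P hP
      rcases pairStruct P hP with ⟨x, hx, hPe, hmP⟩ | ⟨x, hx, hPe, hmP⟩ | ⟨hPsub, hmP, -, -⟩
      · rw [hmP, hPe]
        have hco1 : (↑({u', x} : Finset V) : Set V) = ({x, u'} : Set V) := by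
          simp [Set.pair_comm]
        have hco2 : (↑({x, v} : Finset V) : Set V) = ({x, v} : Set V) := by simp
        rw [hco1, hco2]
        exact_mod_cast Cshift x (hold x hx).1 (hold x hx).2.2.1
      · rw [hmP, hPe]
        have hco1 : (↑({u, x} : Finset V) : Set V) = ({x, u} : Set V) := by
          simp [Set.pair_comm]
        have hco2 : (↑({x, v'} : Finset V) : Set V) = ({x, v'} : Set V) := by simp
        rw [hco1, hco2]
        exact_mod_cast Cshift' x (hold x hx).1 (hold x hx).2.1
      · rw [hmP]
        have h1 : (↑P : Set V) ⊆ st := (hPsub.trans Set.diff_subset).trans hcsub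
        have := CR ↑P h1 (fun hcon => (hmemold P hPsub).1 hcon)
          (fun hcon => (hmemold P hPsub).2 hcon)
        exact_mod_cast le_trans (Nat.le_add_right _ _) this
    -- the transferred family
    have hcouu : (↑({u, u'} : Finset V) : Set V) = ({u, u'} : Set V) := by simp
    have hTstarPairs : PairsOf c (insert ({u, u'} : Finset V) (T'.image m)) := by
      intro P hP
      rcases Finset.mem_insert.mp hP with rfl | hP
      · refine ⟨by rw [hcouu]; exact huuc, Finset.card_pair huu'⟩
      · obtain ⟨Q, hQ, rfl⟩ := Finset.mem_image.mp hP
        exact hPairsStar Q hQ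
    have hTstarcard : (insert ({u, u'} : Finset V) (T'.image m)).card = T'.card + 1 := by
      rw [Finset.card_insert_of_notMem F3, Finset.card_image_of_injOn F2']
    have hsumstar : ∑ P ∈ insert ({u, u'} : Finset V) (T'.image m), (npm G st ↑P : ℝ) =
        (npm G st ({u, u'} : Set V) : ℝ) + ∑ P ∈ T', (npm G st ↑(m P) : ℝ) := by
      rw [Finset.sum_insert F3, Finset.sum_image (fun x hx y hy => F2 x hx y hy), hcouu]
    -- main comparison
    have hMain : npmSum G st (insert ({u, u'} : Finset V) (T'.image m)) ≤
        npmSum G (st ∪ {v, v'}) T' := by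
      rw [npmSum_def, npmSum_def, hsumstar]
      have h1 : (npm G st ∅ : ℝ) + (npm G st ({u, u'} : Set V) : ℝ) ≤
          (npm G (st ∪ {v, v'}) ∅ : ℝ) := by exact_mod_cast Cp
      have h2 : ∑ P ∈ T', (npm G st ↑(m P) : ℝ) ≤
          ∑ P ∈ T', (npm G (st ∪ {v, v'}) ↑P : ℝ) := Finset.sum_le_sum F4
      linarith
    -- the refined bound when an old pair R belongs to T'
    have keyR : ∀ R ∈ T', (↑R : Set V) ⊆ c \ {u, u'} →
        tf ((st.ncard : ℝ) + 2 * ((T'.card : ℝ) + 1)) ≤ npmSum G (st ∪ {v, v'}) T' := by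
      intro R hRT hRsub
      have hmR : m R = R := by
        rcases pairStruct R hRT with ⟨x, hx, hRe, -⟩ | ⟨x, hx, hRe, -⟩ | ⟨-, hmR, -, -⟩
        · exfalso
          have : v ∈ (↑R : Set V) := by rw [hRe]; simp
          exact (hold v (hRsub this)).2.2.2.1 rfl
        · exfalso
          have : v' ∈ (↑R : Set V) := by rw [hRe]; simp
          exact (hold v' (hRsub this)).2.2.2.2 rfl
        · exact hmR
      have hRstar : R ∈ insert ({u, u'} : Finset V) (T'.image m) :=
        Finset.mem_insert_of_mem (Finset.mem_image.mpr ⟨R, hRT, hmR⟩)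
      have hdisjR : Disjoint ({u, u'} : Finset V) R := by
        rw [Finset.disjoint_left]
        intro z hz hzR
        simp only [Finset.mem_insert, Finset.mem_singleton] at hz
        rcases hz with rfl | rfl
        · exact (hmemold R hRsub).1 hzR
        · exact (hmemold R hRsub).2 hzR
      have hS1app := (hIH _ hTstarPairs).2.2 ({u, u'} : Finset V)
        (Finset.mem_insert_self _ _) R hRstar hdisjR
      -- compare the right sides
      have hcoeuR : (↑(({u, u'} : Finset V) ∪ R) : Set V) = (↑R : Set V) ∪ ({u, u'} : Set V) := by
        rw [Finset.coe_union, hcouu, Set.union_comm]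
      have hsplit1 : ∑ P ∈ T', (npm G st ↑(m P) : ℝ) =
          (npm G st ↑(m R) : ℝ) + ∑ P ∈ T'.erase R, (npm G st ↑(m P) : ℝ) :=
        (Finset.add_sum_erase T' _ hRT).symm
      have hsplit2 : ∑ P ∈ T', (npm G (st ∪ {v, v'}) ↑P : ℝ) =
          (npm G (st ∪ {v, v'}) ↑R : ℝ) +
            ∑ P ∈ T'.erase R, (npm G (st ∪ {v, v'}) ↑P : ℝ) :=
        (Finset.add_sum_erase T' _ hRT).symm
      have hterm : (npm G st ↑(m R) : ℝ) + (npm G st ((↑R : Set V) ∪ {u, u'}) : ℝ) ≤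
          (npm G (st ∪ {v, v'}) ↑R : ℝ) := by
        rw [hmR]
        exact_mod_cast CR ↑R (hRsub.trans Set.diff_subset |>.trans hcsub)
          (fun hcon => (hmemold R hRsub).1 hcon) (fun hcon => (hmemold R hRsub).2 hcon)
      have hrest : ∑ P ∈ T'.erase R, (npm G st ↑(m P) : ℝ) ≤
          ∑ P ∈ T'.erase R, (npm G (st ∪ {v, v'}) ↑P : ℝ) :=
        Finset.sum_le_sum (fun P hP => F4 P (Finset.mem_of_mem_erase hP))
      have hCp : (npm G st ∅ : ℝ) + (npm G st ({u, u'} : Set V) : ℝ) ≤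
          (npm G (st ∪ {v, v'}) ∅ : ℝ) := by exact_mod_cast Cp
      calc tf ((st.ncard : ℝ) + 2 * ((T'.card : ℝ) + 1))
          = tf ((st.ncard : ℝ) + 2 * ((insert ({u, u'} : Finset V) (T'.image m)).card)) := by
            rw [hTstarcard]; push_cast; ring_nf
      _ ≤ npmSum G st (insert ({u, u'} : Finset V) (T'.image m)) +
            (npm G st ↑(({u, u'} : Finset V) ∪ R) : ℝ) := hS1app
      _ ≤ npmSum G (st ∪ {v, v'}) T' := by
            rw [npmSum_def, npmSum_def, hsumstar, hcoeuR, hsplit1, hsplit2]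
            linarith
    have cardContra : ∀ A : Finset V, (↑A : Set V) ⊆ c \ {u, u'} → 2 ≤ A.card →
        ∀ z, z ∈ c \ ({u, u'} : Set V) → z ∉ A → False := by
      intro A hA h2 z hz hzA
      have hsub : (↑(insert z A) : Set V) ⊆ c \ {u, u'} := by
        intro w hw
        simp only [Finset.coe_insert, Set.mem_insert_iff] at hw
        rcases hw with rfl | hw
        · exact hz
        · exact hA hw
      have hcard : (insert z A).card = A.card + 1 := Finset.card_insert_of_notMem hzA
      have hle : (insert z A).card ≤ (c \ ({u, u'} : Set V)).ncard := by
        rw [← Set.ncard_coe_finset]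
        exact Set.ncard_le_ncard hsub (Set.toFinite _)
      omega
    refine ⟨?_, ?_, ?_⟩
    · -- SA
      intro hint
      by_cases hRex : ∃ R ∈ T', v ∉ R ∧ v' ∉ R
      · obtain ⟨R, hRT, hRv, hRv'⟩ := hRex
        have hRsub : (↑R : Set V) ⊆ c \ {u, u'} := by
          rcases pairStruct R hRT with ⟨x, hx, hRe, -⟩ | ⟨x, hx, hRe, -⟩ | ⟨h3, -, -, -⟩
          · exact absurd (hRe ▸ (by simp : v ∈ ({x, v} : Finset V))) hRv
          · exact absurd (hRe ▸ (by simp : v' ∈ ({x, v'} : Finset V))) hRv'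
          · exact h3
        calc tf (((st ∪ {v, v'} : Set V).ncard : ℝ) + 2 * T'.card)
            = tf ((st.ncard : ℝ) + 2 * ((T'.card : ℝ) + 1)) := by rw [hn2']; ring_nf
        _ ≤ npmSum G (st ∪ {v, v'}) T' := keyR R hRT hRsub
      · push_neg at hRex
        have hintStar : ∀ A ∈ insert ({u, u'} : Finset V) (T'.image m),
            ∀ B ∈ insert ({u, u'} : Finset V) (T'.image m), A ≠ B → ¬Disjoint A B := by
          have hcommon : ∀ P ∈ T', ∀ B : Finset V, B = {u, u'} ∨ (∃ Q ∈ T', P ≠ Q ∧ B = m Q) →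
              ¬Disjoint (m P) B := by
            intro P hP B hB
            rcases pairStruct P hP with ⟨x, hx, hPe, hmP⟩ | ⟨x, hx, hPe, hmP⟩ |
                ⟨-, -, hv1, hv2⟩
            · rcases hB with rfl | ⟨Q, hQ, hPQ, rfl⟩
              · rw [Finset.not_disjoint_iff]
                exact ⟨u', by rw [hmP]; simp, by simp⟩
              · rcases pairStruct Q hQ with ⟨y, hy, hQe, hmQ⟩ | ⟨y, hy, hQe, hmQ⟩ |
                    ⟨-, -, hv1, hv2⟩
                · rw [Finset.not_disjoint_iff]
                  exact ⟨u', by rw [hmP]; simp, by rw [hmQ]; simp⟩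
                · -- P = {x,v}, Q = {y,v'}: they intersect, so x = y
                  have hnd := hint P hP Q hQ hPQ
                  rw [Finset.not_disjoint_iff] at hnd
                  obtain ⟨z, hzP, hzQ⟩ := hnd
                  rw [hPe] at hzP
                  rw [hQe] at hzQ
                  simp only [Finset.mem_insert, Finset.mem_singleton] at hzP hzQ
                  have hxy : x = y := by
                    rcases hzP with rfl | rfl
                    · rcases hzQ with h | h
                      · exact h
                      · exact absurd h (hold _ hx).2.2.2.2
                    · rcases hzQ with h | h
                      · exact absurd h.symm (hold y hy).2.2.2.1
                      · exact absurd h hvv'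
                  rw [Finset.not_disjoint_iff]
                  exact ⟨x, by rw [hmP]; simp, by rw [hmQ, hxy]; simp⟩
                · exact absurd (hRex Q hQ hv1) hv2
            · rcases hB with rfl | ⟨Q, hQ, hPQ, rfl⟩
              · rw [Finset.not_disjoint_iff]
                exact ⟨u, by rw [hmP]; simp, by simp⟩
              · rcases pairStruct Q hQ with ⟨y, hy, hQe, hmQ⟩ | ⟨y, hy, hQe, hmQ⟩ |
                    ⟨-, -, hv1, hv2⟩
                · have hnd := hint P hP Q hQ hPQ
                  rw [Finset.not_disjoint_iff] at hnd
                  obtain ⟨z, hzP, hzQ⟩ := hnd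
                  rw [hPe] at hzP
                  rw [hQe] at hzQ
                  simp only [Finset.mem_insert, Finset.mem_singleton] at hzP hzQ
                  have hxy : x = y := by
                    rcases hzP with rfl | rfl
                    · rcases hzQ with h | h
                      · exact h
                      · exact absurd h (hold _ hx).2.2.2.1
                    · rcases hzQ with h | h
                      · exact absurd h.symm (hold y hy).2.2.2.2
                      · exact absurd h.symm hvv'
                  rw [Finset.not_disjoint_iff]
                  exact ⟨x, by rw [hmP]; simp, by rw [hmQ, hxy]; simp⟩
                · rw [Finset.not_disjoint_iff]
                  exact ⟨u, by rw [hmP]; simp, by rw [hmQ]; simp⟩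
                · exact absurd (hRex Q hQ hv1) hv2
            · exact absurd (hRex P hP hv1) hv2
          intro A hA B hB hAB
          rcases Finset.mem_insert.mp hA with rfl | hA
          · rcases Finset.mem_insert.mp hB with rfl | hB
            · exact absurd rfl hAB
            · obtain ⟨Q, hQ, rfl⟩ := Finset.mem_image.mp hB
              intro hD
              exact hcommon Q hQ _ (Or.inl rfl) hD.symm
          · obtain ⟨P, hP, rfl⟩ := Finset.mem_image.mp hA
            rcases Finset.mem_insert.mp hB with rfl | hB
            · exact hcommon P hP _ (Or.inl rfl)
            · obtain ⟨Q, hQ, rfl⟩ := Finset.mem_image.mp hB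
              have hPQ : P ≠ Q := fun h => hAB (by rw [h])
              exact hcommon P hP _ (Or.inr ⟨Q, hQ, hPQ, rfl⟩)
        have hSAapp := (hIH _ hTstarPairs).1 hintStar
        calc tf (((st ∪ {v, v'} : Set V).ncard : ℝ) + 2 * T'.card)
            = tf ((st.ncard : ℝ) + 2 * ((insert ({u, u'} : Finset V) (T'.image m)).card)) := by
              rw [hn2', hTstarcard]; push_cast; ring_nf
        _ ≤ npmSum G st (insert ({u, u'} : Finset V) (T'.image m)) := hSAapp
        _ ≤ npmSum G (st ∪ {v, v'}) T' := hMain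
    · -- SB
      intro hT'ne
      have hSBapp := (hIH _ hTstarPairs).2.1 ⟨_, Finset.mem_insert_self _ _⟩
      calc tf (((st ∪ {v, v'} : Set V).ncard : ℝ) + 2 * T'.card - 2)
          = tf ((st.ncard : ℝ) + 2 * ((insert ({u, u'} : Finset V) (T'.image m)).card) - 2) := by
            rw [hn2', hTstarcard]; push_cast; ring_nf
      _ ≤ npmSum G st (insert ({u, u'} : Finset V) (T'.image m)) := hSBapp
      _ ≤ npmSum G (st ∪ {v, v'}) T' := hMain
    · -- S1
      intro P hP Q hQ hPQ
      have mainCase : ∀ P' Q' : Finset V, P' ∈ T' → Q' ∈ T' → Disjoint P' Q' →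
          ∀ x y : V, x ∈ c \ ({u, u'} : Set V) → y ∈ c \ ({u, u'} : Set V) →
          P' = ({x, v} : Finset V) → Q' = ({y, v'} : Finset V) →
          tf (((st ∪ {v, v'} : Set V).ncard : ℝ) + 2 * T'.card) ≤
            npmSum G (st ∪ {v, v'}) T' + (npm G (st ∪ {v, v'}) ↑(P' ∪ Q') : ℝ) := by
        intro P' Q' hP' hQ' hPQ' x y hx hy hPe hQe
        have hxP : x ∈ P' := hPe ▸ (by simp : x ∈ ({x, v} : Finset V))
        have hxy : x ≠ y := by
          intro h
          exact Finset.disjoint_left.mp hPQ' hxP (hQe ▸ (by simp [h] : x ∈ ({y, v'} : Finset V)))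
        have hextra : (npm G st ({x, y} : Set V) : ℝ) ≤
            (npm G (st ∪ {v, v'}) ↑(P' ∪ Q') : ℝ) := by
          have hcoePQ : (↑(P' ∪ Q') : Set V) = ({x, y} : Set V) ∪ {v, v'} := by
            rw [hPe, hQe]
            ext z
            simp only [Finset.coe_union, Finset.coe_insert, Finset.coe_singleton,
              Set.mem_union, Set.mem_insert_iff, Set.mem_singleton_iff]
            tauto
          rw [hcoePQ]
          exact_mod_cast Cext ({x, y} : Set V)
        by_cases hRT : ({x, y} : Finset V) ∈ T'
        · have hRsub : (↑({x, y} : Finset V) : Set V) ⊆ c \ {u, u'} := by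
            intro z hz
            simp only [Finset.coe_insert, Finset.coe_singleton, Set.mem_insert_iff,
              Set.mem_singleton_iff] at hz
            rcases hz with rfl | rfl
            · exact hx
            · exact hy
          calc tf (((st ∪ {v, v'} : Set V).ncard : ℝ) + 2 * T'.card)
              = tf ((st.ncard : ℝ) + 2 * ((T'.card : ℝ) + 1)) := by rw [hn2']; ring_nf
          _ ≤ npmSum G (st ∪ {v, v'}) T' := keyR _ hRT hRsub
          _ ≤ _ := le_add_of_nonneg_right (by positivity)
        · have hRnotstar : ({x, y} : Finset V) ∉ insert ({u, u'} : Finset V) (T'.image m) := by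
            rw [Finset.mem_insert]
            rintro (h | h)
            · have : x ∈ ({u, u'} : Finset V) := h ▸ (by simp : x ∈ ({x, y} : Finset V))
              simp only [Finset.mem_insert, Finset.mem_singleton] at this
              rcases this with h' | h'
              · exact (hold x hx).2.1 h'
              · exact (hold x hx).2.2.1 h'
            · obtain ⟨P'', hP'', hP''eq⟩ := Finset.mem_image.mp h
              rcases pairStruct P'' hP'' with ⟨z, hz, -, hmP''⟩ | ⟨z, hz, -, hmP''⟩ |
                  ⟨-, hmP'', -, -⟩
              · rw [hmP''] at hP''eq
                have : u' ∈ ({x, y} : Finset V) := hP''eq ▸ (by simp : u' ∈ ({u', z} : Finset V))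
                simp only [Finset.mem_insert, Finset.mem_singleton] at this
                rcases this with h' | h'
                · exact (hold x hx).2.2.1 h'.symm
                · exact (hold y hy).2.2.1 h'.symm
              · rw [hmP''] at hP''eq
                have : u ∈ ({x, y} : Finset V) := hP''eq ▸ (by simp : u ∈ ({u, z} : Finset V))
                simp only [Finset.mem_insert, Finset.mem_singleton] at this
                rcases this with h' | h'
                · exact (hold x hx).2.1 h'.symm
                · exact (hold y hy).2.1 h'.symm
              · rw [hmP''] at hP''eq
                rw [hP''eq] at hP''
                exact hRT hP''
          have hTddPairs : PairsOf c
              (insert ({x, y} : Finset V) (insert ({u, u'} : Finset V) (T'.image m))) := by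
            intro A hA
            rcases Finset.mem_insert.mp hA with rfl | hA
            · constructor
              · intro z hz
                simp only [Finset.coe_insert, Finset.coe_singleton, Set.mem_insert_iff,
                  Set.mem_singleton_iff] at hz
                rcases hz with rfl | rfl
                · exact hx.1
                · exact hy.1
              · exact Finset.card_pair hxy
            · exact hTstarPairs A hA
          have hTddcard : (insert ({x, y} : Finset V)
              (insert ({u, u'} : Finset V) (T'.image m))).card = T'.card + 2 := by
            rw [Finset.card_insert_of_notMem hRnotstar, hTstarcard]
          have hSBapp := (hIH _ hTddPairs).2.1 ⟨_, Finset.mem_insert_self _ _⟩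
          have hcoR : (↑({x, y} : Finset V) : Set V) = ({x, y} : Set V) := by simp
          calc tf (((st ∪ {v, v'} : Set V).ncard : ℝ) + 2 * T'.card)
              = tf ((st.ncard : ℝ) + 2 * ((insert ({x, y} : Finset V)
                  (insert ({u, u'} : Finset V) (T'.image m))).card) - 2) := by
                rw [hn2', hTddcard]; push_cast; ring_nf
          _ ≤ npmSum G st (insert ({x, y} : Finset V)
                (insert ({u, u'} : Finset V) (T'.image m))) := hSBapp
          _ ≤ npmSum G (st ∪ {v, v'}) T' + (npm G (st ∪ {v, v'}) ↑(P' ∪ Q') : ℝ) := by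
                rw [npmSum_def, Finset.sum_insert hRnotstar, hcoR]
                have h1 : npmSum G st (insert ({u, u'} : Finset V) (T'.image m)) ≤
                    npmSum G (st ∪ {v, v'}) T' := hMain
                rw [npmSum_def] at h1
                linarith
      rcases pairStruct P hP with ⟨x, hx, hPe, -⟩ | ⟨x, hx, hPe, -⟩ | ⟨hPsub, -, hv1, hv2⟩ <;>
        rcases pairStruct Q hQ with ⟨y, hy, hQe, -⟩ | ⟨y, hy, hQe, -⟩ | ⟨hQsub, -, hw1, hw2⟩
      · -- (1,1): both contain v
        exact absurd (Finset.disjoint_left.mp hPQ (hPe ▸ (by simp : v ∈ ({x, v} : Finset V))))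
          (not_not_intro (hQe ▸ (by simp : v ∈ ({y, v} : Finset V))))
      · -- (1,2): main case
        exact mainCase P Q hP hQ hPQ x y hx hy hPe hQe
      · -- (1,3): cardinality contradiction
        exact absurd (cardContra Q hQsub (le_of_eq (hT' Q hQ).2.symm) x hx
          (Finset.disjoint_left.mp hPQ (hPe ▸ (by simp : x ∈ ({x, v} : Finset V))))) id
      · -- (2,1): main case with swap
        have := mainCase Q P hQ hP hPQ.symm y x hy hx hQe hPe
        rwa [Finset.union_comm Q P] at this
      · -- (2,2): both contain v'
        exact absurd (Finset.disjoint_left.mp hPQ (hPe ▸ (by simp : v' ∈ ({x, v'} : Finset V))))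
          (not_not_intro (hQe ▸ (by simp : v' ∈ ({y, v'} : Finset V))))
      · -- (2,3)
        exact absurd (cardContra Q hQsub (le_of_eq (hT' Q hQ).2.symm) x hx
          (Finset.disjoint_left.mp hPQ (hPe ▸ (by simp : x ∈ ({x, v'} : Finset V))))) id
      · -- (3,1)
        exact absurd (cardContra P hPsub (le_of_eq (hT' P hP).2.symm) y hy
          (Finset.disjoint_right.mp hPQ (hQe ▸ (by simp : y ∈ ({y, v} : Finset V))))) id
      · -- (3,2)
        exact absurd (cardContra P hPsub (le_of_eq (hT' P hP).2.symm) y hy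
          (Finset.disjoint_right.mp hPQ (hQe ▸ (by simp : y ∈ ({y, v'} : Finset V))))) id
      · -- (3,3)
        exfalso
        have h2 : 2 ≤ Q.card := le_of_eq (hT' Q hQ).2.symm
        obtain ⟨y0, hy0⟩ := Finset.card_pos.mp (by omega : 0 < Q.card)
        exact cardContra P hPsub (le_of_eq (hT' P hP).2.symm) y0 (hQsub hy0)
          (Finset.disjoint_right.mp hPQ hy0)

end IncrStep

section MultStep

variable [Fintype V]

lemma tnInv_mult {G : SimpleGraph V} {st1 c1 st2 c2 : Set V} {u u' v v' : V}
    (hdisj : st1 ∩ st2 = ∅)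
    (hu : u ∈ c1) (hu' : u' ∈ c1) (huu' : u ≠ u')
    (hv : v ∈ c2) (hv' : v' ∈ c2) (hvv' : v ≠ v')
    (IH1 : TNInv G st1 c1) (IH2 : TNInv G st2 c2) :
    TNInv G (st1 ∪ st2) ((c1 \ {u, u'}) ∪ (c2 \ {v, v'})) := by
  obtain ⟨hc1sub, hc14, hIH1⟩ := IH1
  obtain ⟨hc2sub, hc24, hIH2⟩ := IH2
  have hd : Disjoint st1 st2 := Set.disjoint_iff_inter_eq_empty.mpr hdisj
  have hn : (((st1 ∪ st2) : Set V).ncard : ℝ) = (st1.ncard : ℝ) + (st2.ncard : ℝ) := by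
    rw [Set.ncard_union_eq hd (Set.toFinite _) (Set.toFinite _)]
    push_cast
    ring
  have hc'sub : (c1 \ {u, u'}) ∪ (c2 \ {v, v'}) ⊆ st1 ∪ st2 :=
    Set.union_subset ((Set.diff_subset.trans hc1sub).trans Set.subset_union_left)
      ((Set.diff_subset.trans hc2sub).trans Set.subset_union_right)
  have hc'4 : ((c1 \ {u, u'}) ∪ (c2 \ {v, v'})).ncard ≤ 4 := by
    have h1 : (c1 \ ({u, u'} : Set V)).ncard ≤ 2 := by
      rw [Set.ncard_diff (by
        rintro z (rfl | rfl)
        · exact hu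
        · exact hu') (Set.toFinite _), Set.ncard_pair huu']
      omega
    have h2 : (c2 \ ({v, v'} : Set V)).ncard ≤ 2 := by
      rw [Set.ncard_diff (by
        rintro z (rfl | rfl)
        · exact hv
        · exact hv') (Set.toFinite _), Set.ncard_pair hvv']
      omega
    calc ((c1 \ {u, u'}) ∪ (c2 \ {v, v'})).ncard
        ≤ (c1 \ ({u, u'} : Set V)).ncard + (c2 \ ({v, v'} : Set V)).ncard :=
          Set.ncard_union_le _ _
    _ ≤ 4 := by omega
  have hp1 : tf ((st1.ncard : ℝ)) ≤ (npm G st1 ∅ : ℝ) := by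
    have h0 := (hIH1 ∅ (by intro P hP; simp at hP)).1 (by simp)
    rw [npmSum_def] at h0
    simpa using h0
  have hp2 : tf ((st2.ncard : ℝ)) ≤ (npm G st2 ∅ : ℝ) := by
    have h0 := (hIH2 ∅ (by intro P hP; simp at hP)).1 (by simp)
    rw [npmSum_def] at h0
    simpa using h0
  have hprod : npm G st1 ∅ * npm G st2 ∅ ≤ npm G (st1 ∪ st2) ∅ := npm_mul_le hdisj
  have hkey : ∀ r : ℝ, r ≤ (st1.ncard : ℝ) + (st2.ncard : ℝ) + 12 →
      tf r ≤ (npm G (st1 ∪ st2) ∅ : ℝ) := by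
    intro r hr
    calc tf r ≤ tf ((st1.ncard : ℝ) + (st2.ncard : ℝ) + 12) := tf_mono hr
    _ = tf (st1.ncard : ℝ) * tf (st2.ncard : ℝ) := (tf_mul_tf _ _).symm
    _ ≤ (npm G st1 ∅ : ℝ) * (npm G st2 ∅ : ℝ) :=
        mul_le_mul hp1 hp2 (tf_pos _).le (by positivity)
    _ ≤ (npm G (st1 ∪ st2) ∅ : ℝ) := by exact_mod_cast hprod
  refine ⟨hc'sub, hc'4, ?_⟩
  intro T hT
  have hTcard : T.card ≤ 6 := pairsOf_card_le hc'4 hT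
  have hTcard' : (T.card : ℝ) ≤ 6 := by exact_mod_cast hTcard
  have hbase : (npm G (st1 ∪ st2) ∅ : ℝ) ≤ npmSum G (st1 ∪ st2) T := by
    rw [npmSum_def]
    have := npm_nonneg_sum (G := G) (st := st1 ∪ st2) T
    linarith
  refine ⟨?_, ?_, ?_⟩
  · intro _
    exact le_trans (hkey _ (by rw [hn]; linarith)) hbase
  · intro _
    exact le_trans (hkey _ (by rw [hn]; linarith)) hbase
  · intro P _ Q _ _
    refine le_trans (le_trans (hkey _ (by rw [hn]; linarith)) hbase) ?_
    have : (0 : ℝ) ≤ (npm G (st1 ∪ st2) ↑(P ∪ Q) : ℝ) := by positivity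
    linarith

end MultStep

section Final

variable [Fintype V]

theorem tnInv_of_twisted {G : SimpleGraph V} {st c : Set V}
    (h : IsTwistedNet G st c) : TNInv G st c := by
  induction h with
  | cyc4 a b c d hab hac had hbc hbd hcd hadj =>
      exact tnInv_cyc4 hab hac had hbc hbd hcd hadj
  | incr st c u u' v v' hprev hu hu' huu' hv hv' hvv' hvv'adj huv hu'v' hcross ih =>
      exact tnInv_incr hu hu' huu' hv hv' hvv' hvv'adj huv hu'v' ih
  | mult st₁ c₁ st₂ c₂ u u' v v' h₁ h₂ hdisj hu hu' huu' hv hv' hvv' huv hu'v' hcross ih₁ ih₂ =>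
      exact tnInv_mult hdisj hu hu' huu' hv hv' hvv' ih₁ ih₂

end Final

/-- Every twisted net with `n` vertices has at least `2^(n/18 + 2/3)` perfect matchings. -/
theorem twisted_net_many_perfect_matchings
    [Fintype V] (G : SimpleGraph V) (c : Set V)
    (h : IsTwistedNet G Set.univ c) :
    (2 : ℝ) ^ ((Fintype.card V : ℝ) / 18 + 2 / 3) ≤
      ({M : Set (Sym2 V) | IsPM G M}.ncard : ℝ) := by
  have hInv := tnInv_of_twisted h
  have hfin := (hInv.2.2 ∅ (by intro P hP; simp at hP)).1 (by simp)
  rw [npmSum_def] at hfin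
  norm_num at hfin
  have hset : {M : Set (Sym2 V) | IsPM G M} = {M : Set (Sym2 V) | IsNearPM G Set.univ ∅ M} := by
    ext M
    simp only [Set.mem_setOf_eq]
    constructor
    · rintro ⟨hsub, huniq⟩
      refine ⟨?_, fun w _ => huniq w, by simp⟩
      intro e
      refine Sym2.ind (f := fun e => e ∈ M →
        ∃ x y, e = s(x, y) ∧ G.Adj x y ∧ x ∈ Set.univ ∧ y ∈ Set.univ) ?_ e
      intro x y he
      exact ⟨x, y, rfl, (G.mem_edgeSet).mp (hsub he), Set.mem_univ x, Set.mem_univ y⟩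
    · rintro ⟨h1, h2, -⟩
      refine ⟨?_, fun w => h2 w (by simp)⟩
      intro e he
      obtain ⟨x, y, rfl, hadj, -, -⟩ := h1 e he
      exact (G.mem_edgeSet).mpr hadj
  rw [hset]
  have hcard : ((Set.univ : Set V).ncard : ℝ) = (Fintype.card V : ℝ) := by
    rw [Set.ncard_univ, Nat.card_eq_fintype_card]
  calc (2 : ℝ) ^ ((Fintype.card V : ℝ) / 18 + 2 / 3)
      = tf ((Fintype.card V : ℝ)) := by unfold tf; congr 1; ring
  _ = tf (((Set.univ : Set V).ncard : ℝ)) := by rw [hcard]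
  _ ≤ ({M : Set (Sym2 V) | IsNearPM G Set.univ ∅ M}.ncard : ℝ) := by rw [hcard]; exact hfin
end
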